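/- arXiv:2501.02514 — 9 statements merged into one kernel-verified Lean document; each statement's English description precedes it below -/
import Mathlib

section
/- If nonnegative random variables e_1,...,e_m satisfy the compound e-value condition Σ_{j∈[m]} E[e_j · 1{H_j true}] ≤ m, then the e-BH procedure at level α — which rejects the hypotheses whose e-values are among the k* largest, where k* = max{k : e_(k) ≥ m/(αk)} and e_(1) ≥ ... ≥ e_(m) are the sorted e-values — controls the false discovery rate at level α, i.e., E[(number of true nulls rejected)/(number of rejections ∨ 1)] ≤ α. -/
open MeasureTheory ProbabilityTheory Finset
open scoped ENNReal Classical

noncomputable section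

/-- `kstar S α e` is the largest `k` such that at least `k` of the e-values in `S`
are `≥ |S|/(α k)`, i.e. such that the `k`-th largest e-value `e_(k)` satisfies
`e_(k) ≥ |S|/(α k)`. -/
def kstar {ι : Type*} (S : Finset ι) (α : ℝ) (e : ι → ℝ) : ℕ :=
  sSup {k | k ≤ S.card ∧ k ≤ (S.filter (fun j => (S.card : ℝ) ≤ α * k * e j)).card}

/-- The e-BH rejection set: the hypotheses whose e-values are at least `|S|/(α k*)`,
equivalently those among the `k*` largest; when `k* = 0` nothing is rejected. -/
def eBHreject {ι : Type*} (S : Finset ι) (α : ℝ) (e : ι → ℝ) : Finset ι :=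
  S.filter (fun j => (S.card : ℝ) ≤ α * (kstar S α e) * e j)

lemma kstar_le_card_reject {ι : Type*} (S : Finset ι) (α : ℝ) (e : ι → ℝ) :
    kstar S α e ≤ (eBHreject S α e).card := by
  have h : kstar S α e ∈
      {k | k ≤ S.card ∧ k ≤ (S.filter (fun j => (S.card : ℝ) ≤ α * k * e j)).card} := by
    apply Nat.sSup_mem
    · exact ⟨0, by simp⟩
    · exact ⟨S.card, fun k hk => hk.1⟩
  exact h.2

/-- if nonnegative random variables `e_1,…,e_m` satisfy the compound
e-value condition `Σ_j E[e_j · 1{H_j true}] ≤ m`, then the e-BH procedure at level `α`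
controls the false discovery rate at level `α`. -/
theorem ebh_fdr_control {Ω : Type*} [MeasurableSpace Ω] (μ : Measure Ω)
    [IsProbabilityMeasure μ] (m : ℕ) (α : ℝ) (hα : 0 < α)
    (e : Fin m → Ω → ℝ) (truth : Fin m → Prop)
    (hmeas : ∀ j, Measurable (e j)) (hint : ∀ j, Integrable (e j) μ)
    (hnn : ∀ j ω, 0 ≤ e j ω)
    (hcompound : ∑ j : Fin m, ∫ ω, e j ω * (if truth j then (1 : ℝ) else 0) ∂μ ≤ m) :
    ∫ ω, (((eBHreject (Finset.univ : Finset (Fin m)) α fun j => e j ω).filter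
            (fun j => truth j)).card : ℝ)
        / ((max (eBHreject (Finset.univ : Finset (Fin m)) α fun j => e j ω).card 1 : ℕ) : ℝ) ∂μ
      ≤ α := by
  set g : Ω → ℝ := fun ω => ∑ j : Fin m, α / m * (e j ω * (if truth j then (1 : ℝ) else 0))
    with hg
  have hterm_nn : ∀ (j : Fin m) (ω : Ω),
      0 ≤ α / m * (e j ω * (if truth j then (1 : ℝ) else 0)) := by
    intro j ω
    refine mul_nonneg (div_nonneg hα.le (Nat.cast_nonneg m))
      (mul_nonneg (hnn j ω) ?_)
    split <;> norm_num
  have hgint : Integrable g μ :=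
    integrable_finset_sum _ fun j _ => ((hint j).mul_const _).const_mul _
  have hpt : ∀ ω, (((eBHreject (Finset.univ : Finset (Fin m)) α fun j => e j ω).filter
        (fun j => truth j)).card : ℝ)
      / ((max (eBHreject (Finset.univ : Finset (Fin m)) α fun j => e j ω).card 1 : ℕ) : ℝ)
      ≤ g ω := by
    intro ω
    set R := eBHreject (Finset.univ : Finset (Fin m)) α (fun j => e j ω) with hRdef
    have hgnn : 0 ≤ g ω := Finset.sum_nonneg fun j _ => hterm_nn j ω
    by_cases h0 : R.card = 0
    · rw [Finset.card_eq_zero] at h0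
      simpa [h0] using hgnn
    · have hr1 : 1 ≤ R.card := Nat.one_le_iff_ne_zero.2 h0
      have hmax : max R.card 1 = R.card := max_eq_left hr1
      have hrpos : (0 : ℝ) < R.card := by exact_mod_cast hr1
      obtain ⟨j0, _⟩ := Finset.card_pos.mp hr1
      have hmpos : (0 : ℝ) < m := by exact_mod_cast j0.pos
      have hk : (kstar Finset.univ α (fun j => e j ω) : ℝ) ≤ R.card := by
        exact_mod_cast kstar_le_card_reject (Finset.univ : Finset (Fin m)) α (fun j => e j ω)
      rw [hmax]
      have step1 : ((R.filter (fun j => truth j)).card : ℝ) / R.card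
          = ∑ _j ∈ R.filter (fun j => truth j), 1 / (R.card : ℝ) := by
        rw [Finset.sum_const, nsmul_eq_mul]; ring
      rw [step1]
      calc ∑ _j ∈ R.filter (fun j => truth j), 1 / (R.card : ℝ)
          ≤ ∑ j ∈ R.filter (fun j => truth j),
              α / m * (e j ω * (if truth j then (1 : ℝ) else 0)) := by
            apply Finset.sum_le_sum
            intro j hj
            have hjR : j ∈ R := (Finset.mem_filter.mp hj).1
            have htj : truth j := (Finset.mem_filter.mp hj).2
            have hje : (m : ℝ) ≤ α * (kstar Finset.univ α (fun j => e j ω)) * e j ω := by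
              have := (Finset.mem_filter.mp hjR).2
              simpa [eBHreject] using this
            have h2 : (m : ℝ) ≤ α * R.card * e j ω := by
              nlinarith [mul_nonneg (mul_nonneg hα.le (hnn j ω)) (sub_nonneg.mpr hk)]
            rw [if_pos htj, mul_one]
            have hrw : α / (m : ℝ) * e j ω = α * e j ω / m := by ring
            rw [hrw, div_le_div_iff₀ hrpos hmpos]
            nlinarith [h2]
        _ ≤ g ω :=
            Finset.sum_le_sum_of_subset_of_nonneg (Finset.subset_univ _)
              (fun j _ _ => hterm_nn j ω)
  have hmain : ∫ ω, (((eBHreject (Finset.univ : Finset (Fin m)) α fun j => e j ω).filter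
        (fun j => truth j)).card : ℝ)
      / ((max (eBHreject (Finset.univ : Finset (Fin m)) α fun j => e j ω).card 1 : ℕ) : ℝ) ∂μ
      ≤ ∫ ω, g ω ∂μ := by
    refine integral_mono_of_nonneg (Filter.Eventually.of_forall fun ω => ?_) hgint
      (Filter.Eventually.of_forall hpt)
    exact div_nonneg (Nat.cast_nonneg _) (Nat.cast_nonneg _)
  refine hmain.trans ?_
  have hsplit : ∫ ω, g ω ∂μ
      = ∑ j : Fin m, α / m * ∫ ω, e j ω * (if truth j then (1 : ℝ) else 0) ∂μ := by
    rw [hg, integral_finset_sum _ fun j _ => ((hint j).mul_const _).const_mul _]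
    exact Finset.sum_congr rfl fun j _ => integral_const_mul _ _
  rw [hsplit, ← Finset.mul_sum]
  have h1 : α / m * ∑ j : Fin m, ∫ ω, e j ω * (if truth j then (1 : ℝ) else 0) ∂μ
      ≤ α / m * m :=
    mul_le_mul_of_nonneg_left hcompound (div_nonneg hα.le (Nat.cast_nonneg m))
  refine h1.trans ?_
  rcases Nat.eq_zero_or_pos m with hm | hm
  · simp [hm, hα.le]
  · have : (0 : ℝ) < m := by exact_mod_cast hm
    field_simp
    exact le_rfl
end
end

section
/- For the e-BH procedure applied to nonnegative values e_1,...,e_m at level α with rejection set R_eBH, the following deterministic inequality holds: FDP = (Σ_{j=1}^m 1{e_j ≥ m/(α|R_eBH|), H_j true}) / (|R_eBH| ∨ 1) ≤ (α/m) · Σ_{j=1}^m e_j · 1{H_j true}. -/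
open MeasureTheory Finset
open scoped Classical

noncomputable section

/-- deterministic FDP bound for the e-BH procedure:
`FDP = #{j : e_j ≥ m/(α |R|), H_j true} / (|R| ∨ 1) ≤ (α/m) · Σ_j e_j · 1{H_j true}`. -/
theorem ebh_fdp_deterministic_bound (m : ℕ) (α : ℝ) (hα : 0 < α)
    (e : Fin m → ℝ) (hnn : ∀ j, 0 ≤ e j) (truth : Fin m → Prop) :
    ((Finset.univ.filter (fun j : Fin m =>
        (m : ℝ) ≤ α * ((eBHreject (Finset.univ : Finset (Fin m)) α e).card : ℝ) * e j
          ∧ truth j)).card : ℝ)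
      / ((max (eBHreject (Finset.univ : Finset (Fin m)) α e).card 1 : ℕ) : ℝ)
    ≤ α / m * ∑ j : Fin m, e j * (if truth j then (1 : ℝ) else 0) := by
  set R := eBHreject (Finset.univ : Finset (Fin m)) α e with hR
  set T := Finset.univ.filter (fun j : Fin m =>
      (m : ℝ) ≤ α * (R.card : ℝ) * e j ∧ truth j) with hT
  have hSnn : (0:ℝ) ≤ ∑ j : Fin m, e j * (if truth j then (1:ℝ) else 0) :=
    Finset.sum_nonneg fun j _ => mul_nonneg (hnn j) (by split <;> norm_num)
  rcases Nat.eq_zero_or_pos m with hm | hm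
  · subst hm
    rw [Finset.eq_empty_of_isEmpty T]
    simp
  have hmpos : (0:ℝ) < m := by exact_mod_cast hm
  rcases Nat.eq_zero_or_pos R.card with hr | hr
  · have hTe : T = ∅ := by
      rw [hT]
      apply Finset.filter_false_of_mem
      intro j _
      rw [hr]
      push_neg
      intro h
      simp at h
      linarith
    rw [hTe]
    simp only [Finset.card_empty, Nat.cast_zero, zero_div]
    positivity
  · have hrpos : (0:ℝ) < R.card := by exact_mod_cast hr
    have hαr : (0:ℝ) < α * R.card := mul_pos hα hrpos
    have hmax : max R.card 1 = R.card := Nat.max_eq_left hr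
    rw [hmax]
    -- each j in T has e j ≥ m/(α * R.card)
    have h1 : ∀ j ∈ T, (m:ℝ) / (α * R.card) ≤ e j := by
      intro j hj
      rw [hT, Finset.mem_filter] at hj
      rw [div_le_iff₀ hαr]
      linarith [hj.2.1]
    have h2 : (T.card : ℝ) * ((m:ℝ) / (α * R.card)) ≤ ∑ j ∈ T, e j := by
      have := Finset.card_nsmul_le_sum T e ((m:ℝ) / (α * R.card)) h1
      simpa [nsmul_eq_mul] using this
    have h3 : ∑ j ∈ T, e j ≤ ∑ j : Fin m, e j * (if truth j then (1:ℝ) else 0) := by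
      have heq : ∑ j ∈ T, e j = ∑ j ∈ T, e j * (if truth j then (1:ℝ) else 0) := by
        apply Finset.sum_congr rfl
        intro j hj
        rw [hT, Finset.mem_filter] at hj
        simp [hj.2.2]
      rw [heq]
      apply Finset.sum_le_sum_of_subset_of_nonneg (Finset.subset_univ T)
      intro j _ _
      exact mul_nonneg (hnn j) (by split <;> norm_num)
    have key : (T.card : ℝ) * m ≤ α * R.card *
        (∑ j : Fin m, e j * (if truth j then (1:ℝ) else 0)) := by
      have h4 := h2.trans h3
      rw [mul_div_assoc'] at h4
      rw [div_le_iff₀ hαr] at h4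
      nlinarith
    rw [div_le_iff₀ hrpos]
    rw [div_mul_eq_mul_div, div_mul_eq_mul_div, le_div_iff₀ hmpos]
    nlinarith
end
end

section
/- Let V_0, V_1, ..., V_K be exchangeable random variables and let T be a random threshold that is invariant under any permutation of (V_0, V_1, ..., V_K). Then E[ 1{V_0 < T} / (1 + Σ_{k=1}^K 1{V_k < T}) ] ≤ 1/(K+1). Consequently (K+1) · 1{V_0 < T} / (1 + Σ_{k=1}^K 1{V_k < T}) is an e-value. -/
open MeasureTheory ProbabilityTheory Finset
open scoped Classical

noncomputable section

/-- if `V_0, …, V_K` are exchangeable and `T = f(V_0,…,V_K)` is a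
permutation-invariant threshold, then
`E[1{V_0 < T} / (1 + Σ_{k=1}^K 1{V_k < T})] ≤ 1/(K+1)`, and consequently
`(K+1)·1{V_0 < T}/(1 + Σ_{k=1}^K 1{V_k < T})` is an e-value. -/
theorem exchangeable_threshold_evalue {Ω : Type*} [MeasurableSpace Ω]
    (μ : Measure Ω) [IsProbabilityMeasure μ] (K : ℕ)
    (V : Fin (K + 1) → Ω → ℝ) (hmeas : ∀ k, Measurable (V k))
    (hexch : ∀ σ : Equiv.Perm (Fin (K + 1)),
      Measure.map (fun ω => fun k => V (σ k) ω) μ = Measure.map (fun ω => fun k => V k ω) μ)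
    (f : (Fin (K + 1) → ℝ) → ℝ) (hf : Measurable f)
    (hsym : ∀ (σ : Equiv.Perm (Fin (K + 1))) (v : Fin (K + 1) → ℝ),
      f (fun k => v (σ k)) = f v) :
    (∫ ω, (if V 0 ω < f (fun k => V k ω) then (1 : ℝ) else 0)
        / (1 + ∑ k ∈ Finset.univ.filter (fun k : Fin (K + 1) => k ≠ 0),
            (if V k ω < f (fun k' => V k' ω) then (1 : ℝ) else 0)) ∂μ)
      ≤ 1 / (K + 1)
    ∧ (∫ ω, (K + 1 : ℝ) * ((if V 0 ω < f (fun k => V k ω) then (1 : ℝ) else 0)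
        / (1 + ∑ k ∈ Finset.univ.filter (fun k : Fin (K + 1) => k ≠ 0),
            (if V k ω < f (fun k' => V k' ω) then (1 : ℝ) else 0))) ∂μ)
      ≤ 1 := by
  classical
  set S : (Fin (K + 1) → ℝ) → ℝ :=
    fun v => ∑ l, (if v l < f v then (1 : ℝ) else 0) with hS
  set g : Fin (K + 1) → (Fin (K + 1) → ℝ) → ℝ :=
    fun k v => (if v k < f v then (1 : ℝ) else 0) / S v with hg
  have hSmeas : Measurable S := by
    apply Finset.measurable_sum
    intro l _
    exact Measurable.ite (measurableSet_lt (measurable_pi_apply l) hf)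
      measurable_const measurable_const
  have hgmeas : ∀ k, Measurable (g k) := fun k =>
    (Measurable.ite (measurableSet_lt (measurable_pi_apply k) hf)
      measurable_const measurable_const).div hSmeas
  have hS_nonneg : ∀ v, 0 ≤ S v := fun v =>
    Finset.sum_nonneg (fun l _ => by positivity)
  have hg_nonneg : ∀ k v, 0 ≤ g k v := fun k v =>
    div_nonneg (by positivity) (hS_nonneg v)
  have hg_le : ∀ k v, g k v ≤ 1 := by
    intro k v
    rcases (hS_nonneg v).eq_or_lt with h0 | h0
    · simp [hg, ← h0]
    · refine (div_le_one h0).mpr ?_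
      exact Finset.single_le_sum (f := fun l => if v l < f v then (1 : ℝ) else 0)
        (fun l _ => by positivity) (Finset.mem_univ k)
  have hsum : ∀ v, ∑ k, g k v ≤ 1 := by
    intro v
    rw [hg]
    simp only [← Finset.sum_div]
    rw [show (∑ i : Fin (K + 1), if v i < f v then (1 : ℝ) else 0) = S v from rfl]
    rcases eq_or_ne (S v) 0 with h0 | h0
    · rw [h0]; simp
    · rw [div_self h0]
  set W : Ω → (Fin (K + 1) → ℝ) := fun ω => fun k => V k ω with hW
  have hWmeas : Measurable W := measurable_pi_lambda _ hmeas
  have hint : ∀ k, Integrable (fun ω => g k (W ω)) μ := by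
    intro k
    refine (integrable_const (1 : ℝ)).mono'
      ((hgmeas k).comp hWmeas).aestronglyMeasurable ?_
    filter_upwards with ω
    rw [Real.norm_eq_abs, abs_of_nonneg (hg_nonneg _ _)]
    exact hg_le _ _
  have hequal : ∀ k, ∫ ω, g k (W ω) ∂μ = ∫ ω, g 0 (W ω) ∂μ := by
    intro k
    set σ := Equiv.swap (0 : Fin (K + 1)) k with hσ
    have h1 : ∫ ω, g k (W ω) ∂μ = ∫ v, g k v ∂(μ.map W) :=
      (integral_map hWmeas.aemeasurable (hgmeas k).aestronglyMeasurable).symm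
    have h2 : ∫ v, g k v ∂(μ.map W)
        = ∫ v, g k v ∂(μ.map (fun ω => fun j => V (σ j) ω)) := by
      rw [hexch σ]
    have h3 : ∫ v, g k v ∂(μ.map (fun ω => fun j => V (σ j) ω))
        = ∫ ω, g k (fun j => V (σ j) ω) ∂μ :=
      integral_map (measurable_pi_lambda _ (fun j => hmeas (σ j))).aemeasurable
        (hgmeas k).aestronglyMeasurable
    have h4 : ∀ ω, g k (fun j => V (σ j) ω) = g 0 (W ω) := by
      intro ω
      have hfv : f (fun j => V (σ j) ω) = f (W ω) := hsym σ (W ω)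
      have hSv : S (fun j => V (σ j) ω) = S (W ω) := by
        rw [hS]
        simp only [hfv]
        exact Equiv.sum_comp σ (fun l => if V l ω < f (W ω) then (1 : ℝ) else 0)
      have hk : σ k = 0 := Equiv.swap_apply_right 0 k
      simp only [hg, hfv, hSv, hk]
      rfl
    rw [h1, h2, h3]
    exact integral_congr_ae (Filter.Eventually.of_forall h4)
  have hmain : (K + 1 : ℝ) * ∫ ω, g 0 (W ω) ∂μ ≤ 1 := by
    have h1 : ∑ k : Fin (K + 1), ∫ ω, g k (W ω) ∂μ
        = (K + 1 : ℝ) * ∫ ω, g 0 (W ω) ∂μ := by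
      rw [Finset.sum_congr rfl (fun k _ => hequal k), Finset.sum_const,
        Finset.card_univ, Fintype.card_fin, nsmul_eq_mul]
      push_cast
      ring
    have h2 : ∑ k : Fin (K + 1), ∫ ω, g k (W ω) ∂μ
        = ∫ ω, ∑ k, g k (W ω) ∂μ :=
      (integral_finset_sum _ (fun k _ => hint k)).symm
    have h3 : ∫ ω, ∑ k, g k (W ω) ∂μ ≤ ∫ _, (1 : ℝ) ∂μ :=
      integral_mono (integrable_finset_sum _ (fun k _ => hint k))
        (integrable_const 1) (fun ω => hsum (W ω))
    rw [integral_const, probReal_univ, smul_eq_mul, mul_one] at h3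
    rw [← h1]
    rw [h2]
    exact h3
  have hpt : ∀ ω, (if V 0 ω < f (fun k => V k ω) then (1 : ℝ) else 0)
      / (1 + ∑ k ∈ Finset.univ.filter (fun k : Fin (K + 1) => k ≠ 0),
          (if V k ω < f (fun k' => V k' ω) then (1 : ℝ) else 0)) = g 0 (W ω) := by
    intro ω
    by_cases h : V 0 ω < f (fun k => V k ω)
    · have hSv : S (W ω) = 1 + ∑ k ∈ Finset.univ.filter (fun k : Fin (K + 1) => k ≠ 0),
          (if V k ω < f (fun k' => V k' ω) then (1 : ℝ) else 0) := by
        have h1 : S (W ω) = (if V 0 ω < f (fun k' => V k' ω) then (1 : ℝ) else 0)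
            + ∑ k ∈ Finset.univ.erase (0 : Fin (K + 1)),
              (if V k ω < f (fun k' => V k' ω) then (1 : ℝ) else 0) :=
          (Finset.add_sum_erase _
            (fun k => if V k ω < f (fun k' => V k' ω) then (1 : ℝ) else 0)
            (Finset.mem_univ (0 : Fin (K + 1)))).symm
        rw [h1, if_pos h, Finset.filter_ne']
      simp only [hg, hSv]
      rfl
    · simp only [hg, hW, if_neg h, zero_div]
  simp_rw [hpt]
  constructor
  · rw [le_div_iff₀ (by positivity : (0:ℝ) < (K:ℝ) + 1), mul_comm]
    exact hmain
  · rw [integral_const_mul]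
    exact hmain
end
end

section
/- Replacement property of the stopping time: if the event {V̂_{K+j,i} < T_j and Y_{K+j,i} ≤ C_{K+j,i}} holds, then T_j equals the oracle threshold T̃_{j,i}, where T̃_{j,i} is defined by the same sup-formula as T_j but with the numerator of the FDP estimate augmented by the extra term 1{V̂_{K+j,i} < t, Y_{K+j,i} ≤ C_{K+j,i}} in place of the '+1'. -/
open Finset
open scoped Classical

noncomputable section

/-- replacement property of the stopping time. With
`FDP̂(t) = ((Σ_k a_k(t) + 1)/D(t))·c` and `FDP̃(t) = ((Σ_k a_k(t) + b(t))/D(t))·c`,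
where `a_k(t) = 1{V̂_k < t, null_k}`, `b(t) = 1{V̂_test < t, null_test}`,
`D(t) = 1 ∨ #{test scores < t}`, and `T = sup{t : FDP̂(t) ≤ α̃}`,
`T̃ = sup{t : FDP̃(t) ≤ α̃}`: if `V̂_test < T` and the test null holds, then `T = T̃`. -/
theorem stopping_time_replacement (K : ℕ) {ι : Type*} [Fintype ι]
    (Vcal : Fin K → ℝ) (nullcal : Fin K → Prop) (Vtest : ℝ) (nulltest : Prop)
    (Wtest : ι → ℝ) (c α' : ℝ) (hc : 0 < c) (hα' : 0 < α')
    (hne : {t : ℝ |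
        ((∑ k : Fin K, (if Vcal k < t ∧ nullcal k then (1 : ℝ) else 0)) + 1)
          / ((max 1 (Finset.univ.filter fun l : ι => Wtest l < t).card : ℕ) : ℝ) * c
        ≤ α'}.Nonempty)
    (hbdd : BddAbove {t : ℝ |
        ((∑ k : Fin K, (if Vcal k < t ∧ nullcal k then (1 : ℝ) else 0))
            + (if Vtest < t ∧ nulltest then (1 : ℝ) else 0))
          / ((max 1 (Finset.univ.filter fun l : ι => Wtest l < t).card : ℕ) : ℝ) * c
        ≤ α'})
    (hreject : Vtest < sSup {t : ℝ |
        ((∑ k : Fin K, (if Vcal k < t ∧ nullcal k then (1 : ℝ) else 0)) + 1)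
          / ((max 1 (Finset.univ.filter fun l : ι => Wtest l < t).card : ℕ) : ℝ) * c
        ≤ α'})
    (hnull : nulltest) :
    sSup {t : ℝ |
        ((∑ k : Fin K, (if Vcal k < t ∧ nullcal k then (1 : ℝ) else 0)) + 1)
          / ((max 1 (Finset.univ.filter fun l : ι => Wtest l < t).card : ℕ) : ℝ) * c
        ≤ α'}
      = sSup {t : ℝ |
        ((∑ k : Fin K, (if Vcal k < t ∧ nullcal k then (1 : ℝ) else 0))
            + (if Vtest < t ∧ nulltest then (1 : ℝ) else 0))
          / ((max 1 (Finset.univ.filter fun l : ι => Wtest l < t).card : ℕ) : ℝ) * c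
        ≤ α'} := by
  set S : Set ℝ := {t : ℝ |
        ((∑ k : Fin K, (if Vcal k < t ∧ nullcal k then (1 : ℝ) else 0)) + 1)
          / ((max 1 (Finset.univ.filter fun l : ι => Wtest l < t).card : ℕ) : ℝ) * c
        ≤ α'} with hS
  set S' : Set ℝ := {t : ℝ |
        ((∑ k : Fin K, (if Vcal k < t ∧ nullcal k then (1 : ℝ) else 0))
            + (if Vtest < t ∧ nulltest then (1 : ℝ) else 0))
          / ((max 1 (Finset.univ.filter fun l : ι => Wtest l < t).card : ℕ) : ℝ) * c
        ≤ α'} with hS'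
  have hDpos : ∀ t : ℝ,
      (0 : ℝ) < ((max 1 (Finset.univ.filter fun l : ι => Wtest l < t).card : ℕ) : ℝ) := by
    intro t
    exact_mod_cast Nat.lt_of_lt_of_le Nat.zero_lt_one (le_max_left _ _)
  have hsub : S ⊆ S' := by
    intro t ht
    have hD := hDpos t
    simp only [hS, Set.mem_setOf_eq] at ht
    simp only [hS', Set.mem_setOf_eq]
    refine le_trans ?_ ht
    gcongr
    split <;> norm_num
  have hbddS : BddAbove S := hbdd.mono hsub
  have hneS' : S'.Nonempty := hne.mono hsub
  apply le_antisymm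
  · exact csSup_le_csSup hbdd hne hsub
  · apply csSup_le hneS'
    intro t ht
    by_contra hlt
    push_neg at hlt
    -- t > sSup S, so t > Vtest, so the indicator is 1 and t ∈ S
    have hVt : Vtest < t := lt_trans hreject hlt
    have htS : t ∈ S := by
      have : (if Vtest < t ∧ nulltest then (1 : ℝ) else 0) = 1 := by
        simp [hVt, hnull]
      simpa [hS, hS', this] using ht
    exact absurd (le_csSup hbddS htS) (not_le.mpr hlt)
end
end

section
/- Hierarchical conformal p-values are valid: under hierarchical exchangeability and a score s monotone nondecreasing in y, the p-value p_{j,i} = (Σ_{k=1}^K (1/N_k) Σ_{i'=1}^{N_k} 1{V_{k,i'} ≤ V̂_{K+j,i}} + 1)/(K+1) satisfies P(p_{j,i} ≤ α and Y_{K+j,i} ≤ C_{K+j,i}) ≤ α for every α ∈ (0,1). -/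
open MeasureTheory ProbabilityTheory Finset
open scoped ENNReal Classical

noncomputable section

/-- Extension of a permutation of `Fin m` to a permutation of `ℕ` (identity beyond `m`). -/
def extSeq (m : ℕ) (σ : Equiv.Perm (Fin m)) : ℕ → ℕ :=
  fun i => if h : i < m then ((σ ⟨i, h⟩ : Fin m) : ℕ) else i

namespace HCPV

/-- weighted indicator count within one group -/
def grpTerm (u : ℕ × (ℕ → ℝ)) (v : ℝ) : ℝ :=
  (1 / (u.1 : ℝ)) * ∑ l ∈ Finset.range u.1, (if u.2 l ≤ v then (1:ℝ) else 0)

def calSum (K : ℕ) (u : Fin (K+1) → ℕ × (ℕ → ℝ)) (v : ℝ) : ℝ :=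
  ∑ k : Fin K, grpTerm (u k.castSucc) v

def allSum (K : ℕ) (u : Fin (K+1) → ℕ × (ℕ → ℝ)) (v : ℝ) : ℝ :=
  ∑ g : Fin (K+1), grpTerm (u g) v

def testCnt (K : ℕ) (τ : ℝ) (u : Fin (K+1) → ℕ × (ℕ → ℝ)) : ℝ :=
  (1 / ((u (Fin.last K)).1 : ℝ)) * ∑ i' ∈ Finset.range (u (Fin.last K)).1,
    (if calSum K u ((u (Fin.last K)).2 i') + 1 ≤ τ then (1:ℝ) else 0)

lemma grpTerm_nonneg (u : ℕ × (ℕ → ℝ)) (v : ℝ) : 0 ≤ grpTerm u v := by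
  unfold grpTerm
  apply mul_nonneg (by positivity)
  apply Finset.sum_nonneg
  intro l _
  split <;> norm_num

lemma grpTerm_le_one (u : ℕ × (ℕ → ℝ)) (v : ℝ) : grpTerm u v ≤ 1 := by
  unfold grpTerm
  rcases Nat.eq_zero_or_pos u.1 with h | h
  · simp [h]
  · have hn : (0:ℝ) < (u.1 : ℝ) := by exact_mod_cast h
    have hsum : ∑ l ∈ Finset.range u.1, (if u.2 l ≤ v then (1:ℝ) else 0) ≤ (u.1 : ℝ) := by
      calc ∑ l ∈ Finset.range u.1, (if u.2 l ≤ v then (1:ℝ) else 0)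
          ≤ ∑ l ∈ Finset.range u.1, (1:ℝ) := by
            apply Finset.sum_le_sum; intro l _; split <;> norm_num
        _ = (u.1 : ℝ) := by simp
    rw [one_div, inv_mul_le_iff₀ hn, mul_one]
    exact hsum

lemma grpTerm_mono (u : ℕ × (ℕ → ℝ)) {v w : ℝ} (h : v ≤ w) : grpTerm u v ≤ grpTerm u w := by
  unfold grpTerm
  apply mul_le_mul_of_nonneg_left _ (by positivity)
  apply Finset.sum_le_sum
  intro l _
  by_cases h1 : u.2 l ≤ v
  · rw [if_pos h1, if_pos (le_trans h1 h)]
  · rw [if_neg h1]; split <;> norm_num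

lemma calSum_mono (K : ℕ) (u : Fin (K+1) → ℕ × (ℕ → ℝ)) {v w : ℝ} (h : v ≤ w) :
    calSum K u v ≤ calSum K u w := by
  apply Finset.sum_le_sum
  intro k _
  exact grpTerm_mono _ h

/-- summing the calibration groups after swapping `g` with the last slot gives the
total sum minus group `g`'s term. -/
lemma calSum_swap (K : ℕ) (u : Fin (K+1) → ℕ × (ℕ → ℝ)) (g : Fin (K+1)) (v : ℝ) :
    calSum K (u ∘ Equiv.swap g (Fin.last K)) v = allSum K u v - grpTerm (u g) v := by
  have h1 : ∑ c : Fin (K+1), grpTerm ((u ∘ Equiv.swap g (Fin.last K)) c) v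
      = allSum K u v := by
    unfold allSum
    exact Equiv.sum_comp (Equiv.swap g (Fin.last K)) (fun c => grpTerm (u c) v)
  have h2 : ∑ c : Fin (K+1), grpTerm ((u ∘ Equiv.swap g (Fin.last K)) c) v
      = calSum K (u ∘ Equiv.swap g (Fin.last K)) v
        + grpTerm ((u ∘ Equiv.swap g (Fin.last K)) (Fin.last K)) v := by
    rw [Fin.sum_univ_castSucc]
    rfl
  have h3 : (u ∘ Equiv.swap g (Fin.last K)) (Fin.last K) = u g := by
    simp [Equiv.swap_apply_right]
  rw [h3] at h2
  linarith [h1, h2]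


lemma testCnt_nonneg (K : ℕ) (τ : ℝ) (u : Fin (K+1) → ℕ × (ℕ → ℝ)) : 0 ≤ testCnt K τ u := by
  unfold testCnt
  apply mul_nonneg (by positivity)
  apply Finset.sum_nonneg
  intro l _
  split <;> norm_num

/-- Deterministic counting bound: summing, over which group plays the test role,
the weighted fraction of within-group p-values that are ≤ τ/(K+1), is at most τ. -/
lemma det_bound (K : ℕ) (τ : ℝ) (hτ : 0 ≤ τ) (u : Fin (K+1) → ℕ × (ℕ → ℝ)) :
    ∑ g : Fin (K+1), testCnt K τ (u ∘ Equiv.swap g (Fin.last K)) ≤ τ := by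
  -- first bound each test count by the count of values with small allSum
  have step1 : ∀ g : Fin (K+1), testCnt K τ (u ∘ Equiv.swap g (Fin.last K))
      ≤ (1 / ((u g).1 : ℝ)) * ∑ i' ∈ Finset.range (u g).1,
          (if allSum K u ((u g).2 i') ≤ τ then (1:ℝ) else 0) := by
    intro g
    unfold testCnt
    have hg : (u ∘ Equiv.swap g (Fin.last K)) (Fin.last K) = u g := by
      simp [Equiv.swap_apply_right]
    rw [hg]
    apply mul_le_mul_of_nonneg_left _ (by positivity)
    apply Finset.sum_le_sum
    intro i' _
    split
    · next hcond =>
      rw [calSum_swap] at hcond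
      have : allSum K u ((u g).2 i') ≤ τ := by
        have := grpTerm_nonneg (u g) ((u g).2 i')
        have hle1 := grpTerm_le_one (u g) ((u g).2 i')
        linarith
      rw [if_pos this]
    · split <;> norm_num
  calc ∑ g : Fin (K+1), testCnt K τ (u ∘ Equiv.swap g (Fin.last K))
      ≤ ∑ g : Fin (K+1), (1 / ((u g).1 : ℝ)) * ∑ i' ∈ Finset.range (u g).1,
          (if allSum K u ((u g).2 i') ≤ τ then (1:ℝ) else 0) :=
        Finset.sum_le_sum (fun g _ => step1 g)
    _ ≤ τ := by
      -- max argument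
      set Vs : Finset ℝ := ((Finset.univ.sigma (fun g : Fin (K+1) => Finset.range (u g).1)).image
          (fun p => (u p.1).2 p.2)).filter (fun v => allSum K u v ≤ τ) with hVs
      rcases Vs.eq_empty_or_nonempty with hemp | hne
      · have : ∀ g : Fin (K+1), (1 / ((u g).1 : ℝ)) * ∑ i' ∈ Finset.range (u g).1,
            (if allSum K u ((u g).2 i') ≤ τ then (1:ℝ) else 0) = 0 := by
          intro g
          have : ∑ i' ∈ Finset.range (u g).1,
              (if allSum K u ((u g).2 i') ≤ τ then (1:ℝ) else 0) = 0 := by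
            apply Finset.sum_eq_zero
            intro i' hi'
            rw [if_neg]
            intro hcon
            have hmem : (u g).2 i' ∈ Vs := by
              rw [hVs]
              simp only [Finset.mem_filter, Finset.mem_image]
              exact ⟨⟨⟨g, i'⟩, by simpa using hi', rfl⟩, hcon⟩
            rw [hemp] at hmem
            exact absurd hmem (Finset.notMem_empty _)
          rw [this, mul_zero]
        rw [Finset.sum_congr rfl (fun g _ => this g)]
        simpa using hτ
      · set v' := Vs.max' hne with hv'
        have hvmem : v' ∈ Vs := Vs.max'_mem hne
        have hv'le : allSum K u v' ≤ τ := by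
          rw [hVs] at hvmem
          exact (Finset.mem_filter.mp hvmem).2
        calc ∑ g : Fin (K+1), (1 / ((u g).1 : ℝ)) * ∑ i' ∈ Finset.range (u g).1,
              (if allSum K u ((u g).2 i') ≤ τ then (1:ℝ) else 0)
            ≤ ∑ g : Fin (K+1), (1 / ((u g).1 : ℝ)) * ∑ i' ∈ Finset.range (u g).1,
              (if (u g).2 i' ≤ v' then (1:ℝ) else 0) := by
              apply Finset.sum_le_sum
              intro g _
              apply mul_le_mul_of_nonneg_left _ (by positivity)
              apply Finset.sum_le_sum
              intro i' hi'
              split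
              · next hcon =>
                have hmem : (u g).2 i' ∈ Vs := by
                  rw [hVs]
                  simp only [Finset.mem_filter, Finset.mem_image]
                  exact ⟨⟨⟨g, i'⟩, by simpa using hi', rfl⟩, hcon⟩
                rw [if_pos (Vs.le_max' _ hmem)]
              · split <;> norm_num
          _ = allSum K u v' := rfl
          _ ≤ τ := hv'le


section Meas

variable {α : Type*} [MeasurableSpace α]

lemma measurable_apply_nat {β : Type*} [MeasurableSpace β] {g : ℕ → α → β} {n : α → ℕ}
    (hg : ∀ m, Measurable (g m)) (hn : Measurable n) :
    Measurable fun a => g (n a) a :=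
  (measurable_from_prod_countable_left (f := fun p : α × ℕ => g p.2 p.1) hg).comp
    (measurable_id.prodMk hn)

variable {𝒳 : Type*} [MeasurableSpace 𝒳] {n : ℕ} {s : 𝒳 → ℝ → ℝ}

/-- group data (size, score sequence) extracted from the full data array along `e`. -/
def toGrp (s : 𝒳 → ℝ → ℝ) {K n : ℕ} (e : Fin (K+1) → Fin n)
    (d : Fin n → ℕ × (ℕ → 𝒳 × ℝ)) : Fin (K+1) → ℕ × (ℕ → ℝ) :=
  fun g => ((d (e g)).1, fun l => s ((d (e g)).2 l).1 ((d (e g)).2 l).2)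

lemma measurable_size (c : Fin n) :
    Measurable fun d : Fin n → ℕ × (ℕ → 𝒳 × ℝ) => (d c).1 :=
  (measurable_pi_apply c).fst

lemma measurable_score (hs : Measurable fun p : 𝒳 × ℝ => s p.1 p.2) (c : Fin n) (l : ℕ) :
    Measurable fun d : Fin n → ℕ × (ℕ → 𝒳 × ℝ) => s ((d c).2 l).1 ((d c).2 l).2 :=
  hs.comp ((measurable_pi_apply l).comp (measurable_pi_apply c).snd)

lemma measurable_grpTerm (hs : Measurable fun p : 𝒳 × ℝ => s p.1 p.2)
    {K : ℕ} (e : Fin (K+1) → Fin n) (g : Fin (K+1))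
    {v : (Fin n → ℕ × (ℕ → 𝒳 × ℝ)) → ℝ} (hv : Measurable v) :
    Measurable fun d : Fin n → ℕ × (ℕ → 𝒳 × ℝ) => grpTerm (toGrp s e d g) (v d) := by
  have : (fun d : Fin n → ℕ × (ℕ → 𝒳 × ℝ) => grpTerm (toGrp s e d g) (v d))
      = fun d => (fun (m : ℕ) (d : Fin n → ℕ × (ℕ → 𝒳 × ℝ)) => (1 / (m : ℝ)) *
          ∑ l ∈ Finset.range m,
            (if s ((d (e g)).2 l).1 ((d (e g)).2 l).2 ≤ v d then (1:ℝ) else 0)) ((d (e g)).1) d := by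
    rfl
  rw [this]
  refine measurable_apply_nat (g := fun (m : ℕ) (d : Fin n → ℕ × (ℕ → 𝒳 × ℝ)) => (1 / (m : ℝ)) *
      ∑ l ∈ Finset.range m,
        (if s ((d (e g)).2 l).1 ((d (e g)).2 l).2 ≤ v d then (1:ℝ) else 0))
    ?_ (measurable_size (e g))
  intro m
  apply Measurable.const_mul
  apply Finset.measurable_sum
  intro l _
  exact Measurable.ite (measurableSet_le (measurable_score hs (e g) l) hv)
    measurable_const measurable_const

lemma measurable_calSum (hs : Measurable fun p : 𝒳 × ℝ => s p.1 p.2)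
    {K : ℕ} (e : Fin (K+1) → Fin n)
    {v : (Fin n → ℕ × (ℕ → 𝒳 × ℝ)) → ℝ} (hv : Measurable v) :
    Measurable fun d : Fin n → ℕ × (ℕ → 𝒳 × ℝ) => calSum K (toGrp s e d) (v d) :=
  Finset.measurable_sum _ (fun k _ => measurable_grpTerm hs e k.castSucc hv)

lemma measurable_testCnt (hs : Measurable fun p : 𝒳 × ℝ => s p.1 p.2)
    {K : ℕ} (τ : ℝ) (e : Fin (K+1) → Fin n) :
    Measurable fun d : Fin n → ℕ × (ℕ → 𝒳 × ℝ) => testCnt K τ (toGrp s e d) := by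
  have : (fun d : Fin n → ℕ × (ℕ → 𝒳 × ℝ) => testCnt K τ (toGrp s e d))
      = fun d => (fun (m : ℕ) (d : Fin n → ℕ × (ℕ → 𝒳 × ℝ)) => (1 / (m : ℝ)) *
          ∑ i' ∈ Finset.range m,
            (if calSum K (toGrp s e d)
                (s ((d (e (Fin.last K))).2 i').1 ((d (e (Fin.last K))).2 i').2) + 1 ≤ τ
              then (1:ℝ) else 0)) ((d (e (Fin.last K))).1) d := rfl
  rw [this]
  refine measurable_apply_nat (g := fun (m : ℕ) (d : Fin n → ℕ × (ℕ → 𝒳 × ℝ)) => (1 / (m : ℝ)) *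
      ∑ i' ∈ Finset.range m,
        (if calSum K (toGrp s e d)
            (s ((d (e (Fin.last K))).2 i').1 ((d (e (Fin.last K))).2 i').2) + 1 ≤ τ
          then (1:ℝ) else 0))
    ?_ (measurable_size (e (Fin.last K)))
  intro m
  apply Measurable.const_mul
  apply Finset.measurable_sum
  intro i' _
  refine Measurable.ite (measurableSet_le ?_ measurable_const) measurable_const measurable_const
  exact (measurable_calSum hs e (measurable_score hs (e (Fin.last K)) i')).add_const 1

end Meas
/-- embedding of the `K+1` relevant groups (K calibration groups and test group `K+j`)
into all `K+M` groups. -/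
def emb (K M : ℕ) (j : Fin M) : Fin (K+1) → Fin (K+M) :=
  fun g => if h : (g : ℕ) < K then Fin.castAdd M ⟨g, h⟩ else Fin.natAdd K j

lemma emb_castSucc (K M : ℕ) (j : Fin M) (k : Fin K) :
    emb K M j k.castSucc = Fin.castAdd M k := by
  unfold emb
  rw [dif_pos (by simpa using k.isLt)]
  apply Fin.ext
  simp

lemma emb_last (K M : ℕ) (j : Fin M) : emb K M j (Fin.last K) = Fin.natAdd K j := by
  unfold emb
  rw [dif_neg (by simp)]

lemma emb_injective (K M : ℕ) (j : Fin M) : Function.Injective (emb K M j) := by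
  intro a b hab
  unfold emb at hab
  split_ifs at hab with h1 h2 h2
  · have := congrArg Fin.val hab
    simp only [Fin.coe_castAdd] at this
    exact Fin.ext this
  · have := congrArg Fin.val hab
    simp only [Fin.coe_castAdd, Fin.coe_natAdd] at this
    omega
  · have := congrArg Fin.val hab
    simp only [Fin.coe_castAdd, Fin.coe_natAdd] at this
    omega
  · have ha : (a : ℕ) = K := by have := a.isLt; omega
    have hb : (b : ℕ) = K := by have := b.isLt; omega
    exact Fin.ext (ha.trans hb.symm)

lemma emb_castSucc_ne (K M : ℕ) (j : Fin M) (k : Fin K) :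
    emb K M j k.castSucc ≠ Fin.natAdd K j := by
  rw [emb_castSucc]
  intro h
  have := congrArg Fin.val h
  simp only [Fin.coe_castAdd, Fin.coe_natAdd] at this
  have := k.isLt
  omega


end HCPV

/-- hierarchical conformal p-values are valid. Under hierarchical
exchangeability and a score `s(x,y)` nondecreasing in `y`, the p-value
`p_{j,i} = (Σ_{k=1}^K (1/N_k) Σ_{i'} 1{V_{k,i'} ≤ V̂_{K+j,i}} + 1)/(K+1)` satisfies
`P(p_{j,i} ≤ α and Y_{K+j,i} ≤ C_{K+j,i}) ≤ α` for every `α ∈ (0,1)`. -/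
theorem hierarchical_conformal_pvalue_valid
    {Ω 𝒳 : Type*} [MeasurableSpace Ω] [MeasurableSpace 𝒳]
    (μ : Measure Ω) [IsProbabilityMeasure μ] (K M : ℕ)
    (N : Fin (K + M) → Ω → ℕ) (X : Fin (K + M) → ℕ → Ω → 𝒳) (Y : Fin (K + M) → ℕ → Ω → ℝ)
    (hNpos : ∀ k ω, 0 < N k ω) (hNmeas : ∀ k, Measurable (N k))
    (hXmeas : ∀ k i, Measurable (X k i)) (hYmeas : ∀ k i, Measurable (Y k i))
    (hgroup : ∀ σ : Equiv.Perm (Fin (K + M)),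
      Measure.map (fun ω => fun k => (N (σ k) ω, fun i => (X (σ k) i ω, Y (σ k) i ω))) μ
        = Measure.map (fun ω => fun k => (N k ω, fun i => (X k i ω, Y k i ω))) μ)
    (hwithin : ∀ (k : Fin (K + M)) (m : ℕ) (σ : Equiv.Perm (Fin m)),
      Measure.map (fun ω => fun l => (N l ω,
          fun i => (X l (if l = k then extSeq m σ i else i) ω,
                    Y l (if l = k then extSeq m σ i else i) ω)))
          (μ.restrict {ω | N k ω = m})
        = Measure.map (fun ω => fun l => (N l ω, fun i => (X l i ω, Y l i ω)))
          (μ.restrict {ω | N k ω = m}))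
    (hNindep : ∀ k : Fin (K + M), IndepFun (N k)
        (fun ω => ((fun i => (X k i ω, Y k i ω)),
          fun l : {l : Fin (K + M) // l ≠ k} => (N (l : Fin (K + M)) ω,
            fun i => (X (l : Fin (K + M)) i ω, Y (l : Fin (K + M)) i ω)))) μ)
    -- score and cutoff; the score is nondecreasing in its second argument
    (s : 𝒳 → ℝ → ℝ) (c : 𝒳 → ℝ)
    (hs : Measurable fun p : 𝒳 × ℝ => s p.1 p.2) (hc : Measurable c)
    (hmono : ∀ x y₁ y₂, y₁ ≤ y₂ → s x y₁ ≤ s x y₂)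
    (j : Fin M) (i : ℕ) (α : ℝ) (hα : 0 < α ∧ α < 1) :
    μ {ω |
        ((∑ k : Fin K, (1 / (N (Fin.castAdd M k) ω : ℝ)) *
            ∑ i' ∈ Finset.range (N (Fin.castAdd M k) ω),
              (if s (X (Fin.castAdd M k) i' ω) (Y (Fin.castAdd M k) i' ω)
                  ≤ s (X (Fin.natAdd K j) i ω) (c (X (Fin.natAdd K j) i ω))
                then (1 : ℝ) else 0)) + 1) / (K + 1) ≤ α
        ∧ Y (Fin.natAdd K j) i ω ≤ c (X (Fin.natAdd K j) i ω)
        ∧ i < N (Fin.natAdd K j) ω}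
      ≤ ENNReal.ofReal α := by
  obtain ⟨hα0, hα1⟩ := hα
  set τ : ℝ := α * ((K : ℝ) + 1) with hτdef
  have hK1 : (0:ℝ) < (K : ℝ) + 1 := by positivity
  have hτ0 : 0 ≤ τ := by rw [hτdef]; positivity
  set t : Fin (K + M) := Fin.natAdd K j with ht
  set e : Fin (K + 1) → Fin (K + M) := HCPV.emb K M j with he
  have helast : e (Fin.last K) = t := by rw [he, ht]; exact HCPV.emb_last K M j
  have hecast : ∀ k : Fin K, e k.castSucc = Fin.castAdd M k := by
    intro k; rw [he]; exact HCPV.emb_castSucc K M j k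
  have hcadne : ∀ k : Fin K, (Fin.castAdd M k) ≠ t := by
    intro k; rw [ht]
    intro h
    have h2 := congrArg Fin.val h
    simp only [Fin.coe_castAdd, Fin.coe_natAdd] at h2
    have := k.isLt
    omega
  have heinj : Function.Injective e := by rw [he]; exact HCPV.emb_injective K M j
  -- the full data array
  set Φ : Ω → (Fin (K + M) → ℕ × (ℕ → 𝒳 × ℝ)) :=
    fun ω => fun k => (N k ω, fun i2 => (X k i2 ω, Y k i2 ω)) with hΦdef
  have hΦ : Measurable Φ := by
    rw [hΦdef]
    exact measurable_pi_lambda _ fun k =>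
      (hNmeas k).prodMk (measurable_pi_lambda _ fun i2 =>
        ((hXmeas k i2).prodMk (hYmeas k i2)))
  have hsize : ∀ ω, (HCPV.toGrp s e (Φ ω) (Fin.last K)).1 = N t ω := by
    intro ω
    show (Φ ω (e (Fin.last K))).1 = N t ω
    rw [helast, hΦdef]
  -- the conformal sets
  set Qs : ℕ → Set (Fin (K + M) → ℕ × (ℕ → 𝒳 × ℝ)) := fun i0 =>
    {d | HCPV.calSum K (HCPV.toGrp s e d) ((HCPV.toGrp s e d (Fin.last K)).2 i0) + 1 ≤ τ}
    with hQs
  have hQmeas : ∀ i0, MeasurableSet (Qs i0) := by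
    intro i0
    rw [hQs]
    exact measurableSet_le
      ((HCPV.measurable_calSum hs e (HCPV.measurable_score hs (e (Fin.last K)) i0)).add_const 1)
      measurable_const
  set E : Set Ω := (Φ ⁻¹' (Qs i)) ∩ {ω | i < N t ω} with hE
  have hiltmeas : MeasurableSet {ω | i < N t ω} := hNmeas t MeasurableSet.of_discrete
  have hEmeas : MeasurableSet E := by
    rw [hE]; exact (hΦ (hQmeas i)).inter hiltmeas
  -- step 0 : target event is contained in E
  have hsub : {ω |
        ((∑ k : Fin K, (1 / (N (Fin.castAdd M k) ω : ℝ)) *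
            ∑ i' ∈ Finset.range (N (Fin.castAdd M k) ω),
              (if s (X (Fin.castAdd M k) i' ω) (Y (Fin.castAdd M k) i' ω)
                  ≤ s (X t i ω) (c (X t i ω))
                then (1 : ℝ) else 0)) + 1) / (K + 1) ≤ α
        ∧ Y t i ω ≤ c (X t i ω)
        ∧ i < N t ω} ⊆ E := by
    rintro ω ⟨h1, h2, h3⟩
    refine ⟨?_, h3⟩
    show Φ ω ∈ Qs i
    rw [hQs]
    show HCPV.calSum K (HCPV.toGrp s e (Φ ω))
        ((HCPV.toGrp s e (Φ ω) (Fin.last K)).2 i) + 1 ≤ τ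
    have hAeq : (∑ k : Fin K, (1 / (N (Fin.castAdd M k) ω : ℝ)) *
            ∑ i' ∈ Finset.range (N (Fin.castAdd M k) ω),
              (if s (X (Fin.castAdd M k) i' ω) (Y (Fin.castAdd M k) i' ω)
                  ≤ s (X t i ω) (c (X t i ω))
                then (1 : ℝ) else 0))
        = HCPV.calSum K (HCPV.toGrp s e (Φ ω)) (s (X t i ω) (c (X t i ω))) := by
      unfold HCPV.calSum
      refine Finset.sum_congr rfl fun k _ => ?_
      have hgrp : HCPV.toGrp s e (Φ ω) k.castSucc
          = (N (Fin.castAdd M k) ω,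
             fun l => s (X (Fin.castAdd M k) l ω) (Y (Fin.castAdd M k) l ω)) := by
        unfold HCPV.toGrp
        rw [hecast k, hΦdef]
      rw [hgrp]
      rfl
    have hvtrue : (HCPV.toGrp s e (Φ ω) (Fin.last K)).2 i = s (X t i ω) (Y t i ω) := by
      show s ((Φ ω (e (Fin.last K))).2 i).1 ((Φ ω (e (Fin.last K))).2 i).2 = _
      rw [helast, hΦdef]
    rw [hvtrue]
    rw [div_le_iff₀ hK1] at h1
    rw [hAeq] at h1
    have hmle : s (X t i ω) (Y t i ω) ≤ s (X t i ω) (c (X t i ω)) := hmono _ _ _ h2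
    have hcs := HCPV.calSum_mono K (HCPV.toGrp s e (Φ ω)) hmle
    rw [hτdef]
    linarith
  -- the averaged-count function
  have hWmeas : Measurable fun d : Fin (K + M) → ℕ × (ℕ → 𝒳 × ℝ) =>
      ENNReal.ofReal (HCPV.testCnt K τ (HCPV.toGrp s e d)) :=
    (HCPV.measurable_testCnt hs τ e).ennreal_ofReal
  set gfun : Ω → ℝ≥0∞ :=
    fun ω => ENNReal.ofReal (HCPV.testCnt K τ (HCPV.toGrp s e (Φ ω))) with hgfun
  have hgmeas : Measurable gfun := hWmeas.comp hΦ
  have hAmeas : ∀ m : ℕ, MeasurableSet {ω | N t ω = m} :=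
    fun m => hNmeas t (measurableSet_singleton m)
  -- within-group swap: all test indices below m are equally likely
  have hswapA : ∀ (m : ℕ) (i0 i1 : ℕ) (h0 : i0 < m) (h1 : i1 < m),
      μ (Φ ⁻¹' (Qs i0) ∩ {ω | N t ω = m}) = μ (Φ ⁻¹' (Qs i1) ∩ {ω | N t ω = m}) := by
    intro m i0 i1 h0 h1
    have hmap := hwithin t m (Equiv.swap ⟨i0, h0⟩ ⟨i1, h1⟩)
    set σ : Equiv.Perm (Fin m) := Equiv.swap ⟨i0, h0⟩ ⟨i1, h1⟩ with hσ
    set Ψ : Ω → (Fin (K + M) → ℕ × (ℕ → 𝒳 × ℝ)) := fun ω => fun l => (N l ω,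
        fun i2 => (X l (if l = t then extSeq m σ i2 else i2) ω,
                   Y l (if l = t then extSeq m σ i2 else i2) ω)) with hΨdef
    have hΨm : Measurable Ψ := by
      rw [hΨdef]
      exact measurable_pi_lambda _ fun l =>
        (hNmeas l).prodMk (measurable_pi_lambda _ fun i2 =>
          ((hXmeas l _).prodMk (hYmeas l _)))
    have hpre : Ψ ⁻¹' (Qs i0) = Φ ⁻¹' (Qs i1) := by
      ext ω
      simp only [Set.mem_preimage, hQs, Set.mem_setOf_eq]
      have hcal : ∀ v, HCPV.calSum K (HCPV.toGrp s e (Ψ ω)) v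
          = HCPV.calSum K (HCPV.toGrp s e (Φ ω)) v := by
        intro v
        unfold HCPV.calSum
        refine Finset.sum_congr rfl fun k _ => ?_
        have hgrp : HCPV.toGrp s e (Ψ ω) k.castSucc = HCPV.toGrp s e (Φ ω) k.castSucc := by
          unfold HCPV.toGrp
          rw [hecast k, hΨdef, hΦdef]
          simp only [if_neg (hcadne k)]
        rw [hgrp]
      have htest : (HCPV.toGrp s e (Ψ ω) (Fin.last K)).2 i0
          = (HCPV.toGrp s e (Φ ω) (Fin.last K)).2 i1 := by
        show s ((Ψ ω (e (Fin.last K))).2 i0).1 ((Ψ ω (e (Fin.last K))).2 i0).2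
            = s ((Φ ω (e (Fin.last K))).2 i1).1 ((Φ ω (e (Fin.last K))).2 i1).2
        have hext : extSeq m σ i0 = i1 := by
          unfold extSeq
          rw [dif_pos h0, hσ, Equiv.swap_apply_left]
        rw [helast]
        simp only [hΨdef, hΦdef, eq_self_iff_true, if_true, hext]
      rw [hcal, htest]
    have heq1 : μ.restrict {ω | N t ω = m} (Ψ ⁻¹' (Qs i0))
        = μ.restrict {ω | N t ω = m} (Φ ⁻¹' (Qs i0)) := by
      have l1 := Measure.map_apply (μ := μ.restrict {ω | N t ω = m}) hΨm (hQmeas i0)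
      have l2 := Measure.map_apply (μ := μ.restrict {ω | N t ω = m}) hΦ (hQmeas i0)
      rw [← l1, ← l2]
      exact congrArg (fun ν => ν (Qs i0)) hmap
    rw [hpre] at heq1
    rw [Measure.restrict_apply (hΦ (hQmeas i1)), Measure.restrict_apply (hΦ (hQmeas i0))] at heq1
    exact heq1.symm
  -- the set integral of gfun over {N t = m}
  have hindmeas : ∀ i' : ℕ, Measurable fun ω => (Φ ⁻¹' (Qs i')).indicator (fun _ => (1:ℝ≥0∞)) ω :=
    fun i' => measurable_const.indicator (hΦ (hQmeas i'))
  have hsetint : ∀ m : ℕ, 0 < m →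
      ∫⁻ ω in {ω | N t ω = m}, gfun ω ∂μ
        = (m : ℝ≥0∞)⁻¹ * ∑ i' ∈ Finset.range m, μ (Φ ⁻¹' (Qs i') ∩ {ω | N t ω = m}) := by
    intro m hm
    have hptwise : ∀ ω ∈ {ω' | N t ω' = m}, gfun ω
        = (m : ℝ≥0∞)⁻¹ * ∑ i' ∈ Finset.range m,
            (Φ ⁻¹' (Qs i')).indicator (fun _ => (1:ℝ≥0∞)) ω := by
      intro ω hω
      have hNω : N t ω = m := hω
      rw [hgfun]
      show ENNReal.ofReal (HCPV.testCnt K τ (HCPV.toGrp s e (Φ ω))) = _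
      unfold HCPV.testCnt
      rw [hsize ω, hNω]
      rw [ENNReal.ofReal_mul (by positivity)]
      congr 1
      · rw [one_div, ENNReal.ofReal_inv_of_pos (by exact_mod_cast hm), ENNReal.ofReal_natCast]
      · rw [ENNReal.ofReal_sum_of_nonneg (fun i' _ => by split <;> norm_num)]
        refine Finset.sum_congr rfl fun i' _ => ?_
        by_cases hQ : HCPV.calSum K (HCPV.toGrp s e (Φ ω))
            ((HCPV.toGrp s e (Φ ω) (Fin.last K)).2 i') + 1 ≤ τ
        · rw [Set.indicator_of_mem (show ω ∈ Φ ⁻¹' Qs i' from hQ), if_pos hQ]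
          exact ENNReal.ofReal_one
        · rw [Set.indicator_of_notMem (show ω ∉ Φ ⁻¹' Qs i' from hQ), if_neg hQ]
          exact ENNReal.ofReal_zero
    calc ∫⁻ ω in {ω | N t ω = m}, gfun ω ∂μ
        = ∫⁻ ω in {ω | N t ω = m}, (m : ℝ≥0∞)⁻¹ * ∑ i' ∈ Finset.range m,
            (Φ ⁻¹' (Qs i')).indicator (fun _ => (1:ℝ≥0∞)) ω ∂μ :=
          setLIntegral_congr_fun (hAmeas m) hptwise
      _ = (m : ℝ≥0∞)⁻¹ * ∫⁻ ω in {ω | N t ω = m}, ∑ i' ∈ Finset.range m,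
            (Φ ⁻¹' (Qs i')).indicator (fun _ => (1:ℝ≥0∞)) ω ∂μ := by
          rw [lintegral_const_mul _ (Finset.measurable_sum _ fun i' _ => hindmeas i')]
      _ = (m : ℝ≥0∞)⁻¹ * ∑ i' ∈ Finset.range m, ∫⁻ ω in {ω | N t ω = m},
            (Φ ⁻¹' (Qs i')).indicator (fun _ => (1:ℝ≥0∞)) ω ∂μ := by
          rw [lintegral_finset_sum _ fun i' _ => hindmeas i']
      _ = (m : ℝ≥0∞)⁻¹ * ∑ i' ∈ Finset.range m, μ (Φ ⁻¹' (Qs i') ∩ {ω | N t ω = m}) := by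
          congr 1
          refine Finset.sum_congr rfl fun i' _ => ?_
          rw [lintegral_indicator (hΦ (hQmeas i')), setLIntegral_one,
            Measure.restrict_apply (hΦ (hQmeas i'))]
  -- decomposition over the size of the test group
  have hdisjA : Pairwise (Function.onFun Disjoint fun m => {ω | N t ω = m}) := by
    intro m1 m2 hne12
    refine Set.disjoint_left.mpr ?_
    intro ω h1 h2
    exact hne12 (h1.symm.trans h2)
  have key1 : μ E ≤ ∫⁻ ω, gfun ω ∂μ := by
    have hperm : ∀ m : ℕ, μ (E ∩ {ω | N t ω = m}) ≤ ∫⁻ ω in {ω | N t ω = m}, gfun ω ∂μ := by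
      intro m
      by_cases him : i < m
      · have hm0 : ((m:ℝ≥0∞)) ≠ 0 := by
          simp only [ne_eq, Nat.cast_eq_zero]
          omega
        have hEm : E ∩ {ω | N t ω = m} = Φ ⁻¹' (Qs i) ∩ {ω | N t ω = m} := by
          rw [hE]
          ext ω
          simp only [Set.mem_inter_iff, Set.mem_preimage, Set.mem_setOf_eq]
          constructor
          · rintro ⟨⟨hq, -⟩, hm⟩; exact ⟨hq, hm⟩
          · rintro ⟨hq, hm⟩; exact ⟨⟨hq, by rw [hm]; exact him⟩, hm⟩
        have hall : ∀ i' ∈ Finset.range m, μ (Φ ⁻¹' (Qs i') ∩ {ω | N t ω = m})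
            = μ (Φ ⁻¹' (Qs i) ∩ {ω | N t ω = m}) := fun i' hi' =>
          hswapA m i' i (Finset.mem_range.mp hi') him
        have hcomp : ∫⁻ ω in {ω | N t ω = m}, gfun ω ∂μ
            = μ (Φ ⁻¹' (Qs i) ∩ {ω | N t ω = m}) := by
          rw [hsetint m (by omega), Finset.sum_congr rfl hall, Finset.sum_const,
            Finset.card_range, nsmul_eq_mul, ← mul_assoc,
            ENNReal.inv_mul_cancel hm0 (ENNReal.natCast_ne_top m), one_mul]
        rw [hEm, hcomp]
      · have hempty : E ∩ {ω | N t ω = m} = ∅ := by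
          rw [hE]
          ext ω
          simp only [Set.mem_inter_iff, Set.mem_preimage, Set.mem_setOf_eq,
            Set.mem_empty_iff_false, iff_false, not_and]
          rintro ⟨-, hlt⟩ hm
          rw [hm] at hlt
          exact him hlt
        rw [hempty]
        simp
    have hEunion : E = ⋃ m, (E ∩ {ω | N t ω = m}) := by
      ext ω
      simp only [Set.mem_iUnion, Set.mem_inter_iff, Set.mem_setOf_eq]
      constructor
      · intro h; exact ⟨N t ω, h, rfl⟩
      · rintro ⟨m, hm, -⟩; exact hm
    have hdisj : Pairwise (Function.onFun Disjoint fun m => E ∩ {ω | N t ω = m}) := by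
      intro m1 m2 hne12
      refine Set.disjoint_left.mpr ?_
      rintro ω ⟨-, h1⟩ ⟨-, h2⟩
      exact hne12 (h1.symm.trans h2)
    have hdecomp : μ E = ∑' m, μ (E ∩ {ω | N t ω = m}) := by
      conv_lhs => rw [hEunion]
      exact measure_iUnion hdisj fun m => hEmeas.inter (hAmeas m)
    have huniv : (⋃ m, {ω | N t ω = m}) = Set.univ :=
      Set.eq_univ_of_forall fun ω => Set.mem_iUnion.mpr ⟨N t ω, rfl⟩
    have hlim : ∑' m, ∫⁻ ω in {ω | N t ω = m}, gfun ω ∂μ = ∫⁻ ω, gfun ω ∂μ := by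
      rw [← lintegral_iUnion hAmeas hdisjA gfun, huniv, Measure.restrict_univ]
    rw [hdecomp, ← hlim]
    exact ENNReal.tsum_le_tsum hperm
  -- group swap: each of the K+1 groups is equally likely to be the test group
  have hswapG : ∀ gI : Fin (K + 1),
      ∫⁻ ω, ENNReal.ofReal (HCPV.testCnt K τ
        (HCPV.toGrp s e (Φ ω) ∘ (Equiv.swap gI (Fin.last K)))) ∂μ
        = ∫⁻ ω, gfun ω ∂μ := by
    intro gI
    have hmap := hgroup (Equiv.swap (e gI) (e (Fin.last K)))
    set σ : Equiv.Perm (Fin (K + M)) := Equiv.swap (e gI) (e (Fin.last K)) with hσ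
    set Φσ : Ω → (Fin (K + M) → ℕ × (ℕ → 𝒳 × ℝ)) :=
      fun ω => fun k => (N (σ k) ω, fun i2 => (X (σ k) i2 ω, Y (σ k) i2 ω)) with hΦσdef
    have hΦσm : Measurable Φσ := by
      rw [hΦσdef]
      exact measurable_pi_lambda _ fun k =>
        (hNmeas (σ k)).prodMk (measurable_pi_lambda _ fun i2 =>
          ((hXmeas (σ k) i2).prodMk (hYmeas (σ k) i2)))
    have hid2 : ∀ ω, HCPV.toGrp s e (Φσ ω)
        = (HCPV.toGrp s e (Φ ω)) ∘ (Equiv.swap gI (Fin.last K)) := by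
      intro ω
      funext g'
      have hkey : σ (e g') = e (Equiv.swap gI (Fin.last K) g') := by
        rcases eq_or_ne g' gI with rfl | hg1
        · rw [hσ, Equiv.swap_apply_left, Equiv.swap_apply_left]
        · rcases eq_or_ne g' (Fin.last K) with rfl | hg2
          · rw [hσ, Equiv.swap_apply_right, Equiv.swap_apply_right]
          · rw [hσ, Equiv.swap_apply_of_ne_of_ne (fun h => hg1 (heinj h))
              (fun h => hg2 (heinj h)), Equiv.swap_apply_of_ne_of_ne hg1 hg2]
      show ((Φσ ω (e g')).1, fun l => s ((Φσ ω (e g')).2 l).1 ((Φσ ω (e g')).2 l).2)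
          = ((Φ ω (e (Equiv.swap gI (Fin.last K) g'))).1,
             fun l => s ((Φ ω (e (Equiv.swap gI (Fin.last K) g'))).2 l).1
                        ((Φ ω (e (Equiv.swap gI (Fin.last K) g'))).2 l).2)
      have harr : Φσ ω (e g') = Φ ω (e (Equiv.swap gI (Fin.last K) g')) := by
        simp only [hΦσdef, hΦdef, hkey]
      rw [harr]
    have hstep : ∫⁻ ω, ENNReal.ofReal (HCPV.testCnt K τ (HCPV.toGrp s e (Φσ ω))) ∂μ
        = ∫⁻ ω, gfun ω ∂μ := by
      calc ∫⁻ ω, ENNReal.ofReal (HCPV.testCnt K τ (HCPV.toGrp s e (Φσ ω))) ∂μ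
          = ∫⁻ d, ENNReal.ofReal (HCPV.testCnt K τ (HCPV.toGrp s e d)) ∂(Measure.map Φσ μ) :=
            (lintegral_map hWmeas hΦσm).symm
        _ = ∫⁻ d, ENNReal.ofReal (HCPV.testCnt K τ (HCPV.toGrp s e d)) ∂(Measure.map Φ μ) := by
            rw [hmap]
        _ = ∫⁻ ω, ENNReal.ofReal (HCPV.testCnt K τ (HCPV.toGrp s e (Φ ω))) ∂μ :=
            lintegral_map hWmeas hΦ
    rw [← hstep]
    refine lintegral_congr fun ω => ?_
    rw [hid2 ω]
  -- measurability of each swapped integrand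
  have hmeasG : ∀ gI : Fin (K + 1), Measurable fun ω =>
      ENNReal.ofReal (HCPV.testCnt K τ
        (HCPV.toGrp s e (Φ ω) ∘ (Equiv.swap gI (Fin.last K)))) := by
    intro gI
    have hre : (fun ω => ENNReal.ofReal (HCPV.testCnt K τ
        (HCPV.toGrp s e (Φ ω) ∘ (Equiv.swap gI (Fin.last K)))))
        = fun ω => ENNReal.ofReal (HCPV.testCnt K τ
          (HCPV.toGrp s (e ∘ (Equiv.swap gI (Fin.last K))) (Φ ω))) := rfl
    rw [hre]
    exact ((HCPV.measurable_testCnt hs τ _).comp hΦ).ennreal_ofReal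
  -- combine via the deterministic bound
  have hsum : ((K:ℝ≥0∞) + 1) * ∫⁻ ω, gfun ω ∂μ ≤ ENNReal.ofReal τ := by
    have h1 : ∑ gI : Fin (K + 1), ∫⁻ ω, ENNReal.ofReal (HCPV.testCnt K τ
        (HCPV.toGrp s e (Φ ω) ∘ (Equiv.swap gI (Fin.last K)))) ∂μ
        = ((K:ℝ≥0∞) + 1) * ∫⁻ ω, gfun ω ∂μ := by
      rw [Finset.sum_congr rfl fun gI _ => hswapG gI, Finset.sum_const, Finset.card_univ,
        Fintype.card_fin, nsmul_eq_mul]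
      norm_num
    have h3 : ∀ ω, ∑ gI : Fin (K + 1), ENNReal.ofReal (HCPV.testCnt K τ
        (HCPV.toGrp s e (Φ ω) ∘ (Equiv.swap gI (Fin.last K)))) ≤ ENNReal.ofReal τ := by
      intro ω
      rw [← ENNReal.ofReal_sum_of_nonneg fun gI _ => HCPV.testCnt_nonneg K τ _]
      exact ENNReal.ofReal_le_ofReal (HCPV.det_bound K τ hτ0 (HCPV.toGrp s e (Φ ω)))
    calc ((K:ℝ≥0∞) + 1) * ∫⁻ ω, gfun ω ∂μ
        = ∑ gI : Fin (K + 1), ∫⁻ ω, ENNReal.ofReal (HCPV.testCnt K τ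
            (HCPV.toGrp s e (Φ ω) ∘ (Equiv.swap gI (Fin.last K)))) ∂μ := h1.symm
      _ = ∫⁻ ω, ∑ gI : Fin (K + 1), ENNReal.ofReal (HCPV.testCnt K τ
            (HCPV.toGrp s e (Φ ω) ∘ (Equiv.swap gI (Fin.last K)))) ∂μ :=
          (lintegral_finset_sum _ fun gI _ => hmeasG gI).symm
      _ ≤ ∫⁻ _, ENNReal.ofReal τ ∂μ := lintegral_mono h3
      _ = ENNReal.ofReal τ := by rw [lintegral_const, measure_univ, mul_one]
  have key2 : ∫⁻ ω, gfun ω ∂μ ≤ ENNReal.ofReal α := by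
    have hne0 : ((K:ℝ≥0∞) + 1) ≠ 0 := by simp
    have hnetop : ((K:ℝ≥0∞) + 1) ≠ ⊤ := by
      exact ENNReal.add_ne_top.mpr ⟨ENNReal.natCast_ne_top K, ENNReal.one_ne_top⟩
    have hdiv : ∫⁻ ω, gfun ω ∂μ ≤ ENNReal.ofReal τ / ((K:ℝ≥0∞) + 1) := by
      rw [ENNReal.le_div_iff_mul_le (Or.inl hne0) (Or.inl hnetop)]
      exact hsum.trans_eq' (mul_comm _ _)
    refine hdiv.trans (le_of_eq ?_)
    have hcast : ((K:ℝ≥0∞) + 1) = ENNReal.ofReal ((K:ℝ) + 1) := by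
      rw [ENNReal.ofReal_add (by positivity) zero_le_one, ENNReal.ofReal_natCast,
        ENNReal.ofReal_one]
    rw [hcast, ← ENNReal.ofReal_div_of_pos hK1]
    congr 1
    rw [hτdef]
    field_simp
  exact le_trans (measure_mono hsub) (le_trans key1 key2)
end
end

section
/- Sandwich inequality for group-weighted e-values: let Z̃_0, Z̃_1, ..., Z̃_K be exchangeable random vectors (with exchangeable coordinates given group sizes, group sizes independent of values), let T̃ be a statistic invariant to permutations of the groups and within groups, and for each group k define W_k = (1/N_k) Σ_{i'=1}^{N_k} 1{A_{k,i'}(T̃)} where A_{k,i'}(t) is a measurable event determined by Z_{k,i'} and t. Then E[ W_0 / (Σ_{k=1}^K W_k + W_0) ] ≤ 1/(K+1), where 0/0 := 0. -/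
open MeasureTheory ProbabilityTheory Finset
open scoped Classical

noncomputable section

/-- sandwich inequality for group-weighted e-values. Let
`Z̃_0, …, Z̃_K` be exchangeable random vectors (exchangeable coordinates given group
sizes, group sizes independent of values), let `T̃ = f(data)` be invariant to
permutations of the groups and within the groups, and
`W_k = (1/N_k) Σ_{i'} 1{A(Z_{k,i'}, T̃)}`. Then
`E[W_0/(Σ_{k=1}^K W_k + W_0)] ≤ 1/(K+1)` (with `0/0 := 0`). -/
theorem group_weighted_sandwich
    {Ω 𝒵 : Type*} [MeasurableSpace Ω] [MeasurableSpace 𝒵]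
    (μ : Measure Ω) [IsProbabilityMeasure μ] (K : ℕ)
    (N : Fin (K + 1) → Ω → ℕ) (Z : Fin (K + 1) → ℕ → Ω → 𝒵)
    (hNpos : ∀ k ω, 0 < N k ω) (hNmeas : ∀ k, Measurable (N k))
    (hZmeas : ∀ k i, Measurable (Z k i))
    (hgroup : ∀ σ : Equiv.Perm (Fin (K + 1)),
      Measure.map (fun ω => fun k => (N (σ k) ω, fun i => Z (σ k) i ω)) μ
        = Measure.map (fun ω => fun k => (N k ω, fun i => Z k i ω)) μ)
    (hwithin : ∀ (k : Fin (K + 1)) (m : ℕ) (σ : Equiv.Perm (Fin m)),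
      Measure.map (fun ω => fun l => (N l ω,
          fun i => Z l (if l = k then extSeq m σ i else i) ω))
          (μ.restrict {ω | N k ω = m})
        = Measure.map (fun ω => fun l => (N l ω, fun i => Z l i ω))
          (μ.restrict {ω | N k ω = m}))
    (hNindep : ∀ k : Fin (K + 1), IndepFun (N k)
        (fun ω => ((fun i => Z k i ω),
          fun l : {l : Fin (K + 1) // l ≠ k} => (N (l : Fin (K + 1)) ω,
            fun i => Z (l : Fin (K + 1)) i ω))) μ)
    -- a permutation-invariant statistic of the data
    (f : (Fin (K + 1) → ℕ × (ℕ → 𝒵)) → ℝ) (hf : Measurable f)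
    (hfsym : ∀ (σ : Equiv.Perm (Fin (K + 1))) (v : Fin (K + 1) → ℕ × (ℕ → 𝒵)),
      f (fun k => v (σ k)) = f v)
    (hfwithin : ∀ (k : Fin (K + 1)) (m : ℕ) (σ : Equiv.Perm (Fin m))
        (v : Fin (K + 1) → ℕ × (ℕ → 𝒵)), (v k).1 = m →
      f (Function.update v k ((v k).1, fun i => (v k).2 (extSeq m σ i))) = f v)
    -- the indicator events, measurable in the data point and the threshold
    (A : 𝒵 → ℝ → Prop) (hA : MeasurableSet {p : 𝒵 × ℝ | A p.1 p.2}) :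
    (∫ ω,
        ((1 / (N 0 ω : ℝ)) * ∑ i' ∈ Finset.range (N 0 ω),
          (if A (Z 0 i' ω) (f fun k => (N k ω, fun i => Z k i ω)) then (1 : ℝ) else 0))
        / (∑ k : Fin (K + 1), (1 / (N k ω : ℝ)) * ∑ i' ∈ Finset.range (N k ω),
          (if A (Z k i' ω) (f fun k' => (N k' ω, fun i => Z k' i ω)) then (1 : ℝ) else 0)) ∂μ)
      ≤ 1 / (K + 1) := by
  -- the data map
  set D : Ω → (Fin (K + 1) → ℕ × (ℕ → 𝒵)) :=
    (fun ω => fun k => (N k ω, fun i => Z k i ω)) with hDdef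
  have hDmeas : Measurable D :=
    measurable_pi_lambda _ fun k =>
      (hNmeas k).prodMk (measurable_pi_lambda _ fun i => hZmeas k i)
  -- group weights
  have hWmk : ∀ (k : Fin (K + 1)), Measurable fun v : Fin (K + 1) → ℕ × (ℕ → 𝒵) =>
      (1 / ((v k).1 : ℝ)) * ∑ i ∈ Finset.range (v k).1,
        (if A ((v k).2 i) (f v) then (1 : ℝ) else 0) := by
    intro k
    have hF : ∀ n : ℕ, Measurable fun v : Fin (K + 1) → ℕ × (ℕ → 𝒵) =>
        (1 / (n : ℝ)) * ∑ i ∈ Finset.range n,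
          (if A ((v k).2 i) (f v) then (1 : ℝ) else 0) := by
      intro n
      apply Measurable.const_mul
      apply Finset.measurable_sum
      intro i _
      have hset : MeasurableSet {v : Fin (K + 1) → ℕ × (ℕ → 𝒵) | A ((v k).2 i) (f v)} := by
        have hmap : Measurable fun v : Fin (K + 1) → ℕ × (ℕ → 𝒵) => (((v k).2 i), f v) :=
          ((measurable_pi_apply i).comp (measurable_snd.comp (measurable_pi_apply k))).prodMk hf
        exact hmap hA
      exact Measurable.ite hset measurable_const measurable_const
    have : Measurable fun p : (Fin (K + 1) → ℕ × (ℕ → 𝒵)) × ℕ =>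
        (1 / (p.2 : ℝ)) * ∑ i ∈ Finset.range p.2,
          (if A ((p.1 k).2 i) (f p.1) then (1 : ℝ) else 0) :=
      measurable_from_prod_countable_left fun n => hF n
    exact this.comp (measurable_id.prodMk
      (measurable_fst.comp (measurable_pi_apply k)))
  set W : Fin (K + 1) → (Fin (K + 1) → ℕ × (ℕ → 𝒵)) → ℝ :=
    fun k v => (1 / ((v k).1 : ℝ)) * ∑ i ∈ Finset.range (v k).1,
      (if A ((v k).2 i) (f v) then (1 : ℝ) else 0) with hWdef
  have hWmeas : ∀ k, Measurable (W k) := hWmk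
  have hWnonneg : ∀ k v, 0 ≤ W k v := by
    intro k v
    apply mul_nonneg (by positivity)
    exact Finset.sum_nonneg fun i _ => by positivity
  set S : (Fin (K + 1) → ℕ × (ℕ → 𝒵)) → ℝ := fun v => ∑ k, W k v with hSdef
  have hSmeas : Measurable S := Finset.measurable_sum _ fun k _ => hWmeas k
  have hSnonneg : ∀ v, 0 ≤ S v := fun v => Finset.sum_nonneg fun k _ => hWnonneg k v
  set g : Fin (K + 1) → (Fin (K + 1) → ℕ × (ℕ → 𝒵)) → ℝ := fun k v => W k v / S v with hgdef
  have hgmeas : ∀ k, Measurable (g k) := fun k => (hWmeas k).div hSmeas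
  have hgnonneg : ∀ k v, 0 ≤ g k v := fun k v => div_nonneg (hWnonneg k v) (hSnonneg v)
  have hgle : ∀ k v, g k v ≤ 1 := by
    intro k v
    rcases eq_or_lt_of_le (hSnonneg v) with h | h
    · have h0 : ∑ l : Fin (K + 1), W l v = 0 := h.symm
      have hW0 : W k v = 0 :=
        (Finset.sum_eq_zero_iff_of_nonneg fun l (_ : l ∈ Finset.univ) => hWnonneg l v).mp
          h0 k (Finset.mem_univ k)
      simp [hgdef, hW0]
    · rw [div_le_one h]
      exact Finset.single_le_sum (fun l (_ : l ∈ Finset.univ) => hWnonneg l v)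
        (Finset.mem_univ k)
  have hsum_le : ∀ v, ∑ k, g k v ≤ 1 := by
    intro v
    have hrw : ∑ k : Fin (K + 1), g k v = S v / S v := by
      simp only [hgdef]
      rw [← Finset.sum_div]
    rw [hrw]
    rcases eq_or_lt_of_le (hSnonneg v) with h | h
    · rw [← h]; simp
    · rw [div_le_one h]
  set ν := Measure.map D μ with hν
  have hνprob : IsProbabilityMeasure ν := Measure.isProbabilityMeasure_map hDmeas.aemeasurable
  have hint : ∀ k, Integrable (g k) ν := by
    intro k
    refine (integrable_const (1 : ℝ)).mono' (hgmeas k).aestronglyMeasurable ?_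
    filter_upwards with v
    rw [Real.norm_eq_abs, abs_of_nonneg (hgnonneg k v)]
    exact hgle k v
  -- pointwise compatibility of W with group permutations
  have hWcomp : ∀ (σ : Equiv.Perm (Fin (K + 1))) (j : Fin (K + 1)) v,
      W j (fun l => v (σ l)) = W (σ j) v := by
    intro σ j v
    simp only [hWdef]
    rw [hfsym σ v]
  have hgcomp : ∀ (σ : Equiv.Perm (Fin (K + 1))) (j : Fin (K + 1)) v,
      g j (fun l => v (σ l)) = g (σ j) v := by
    intro σ j v
    simp only [hgdef, hSdef, hWcomp σ]
    rw [Equiv.sum_comp σ (fun l => W l v)]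
  -- exchangeability of the e-values
  have hswap : ∀ k : Fin (K + 1), ∫ v, g k v ∂ν = ∫ v, g 0 v ∂ν := by
    intro k
    set σ := Equiv.swap (0 : Fin (K + 1)) k with hσ
    have hcσ : Measurable fun v : Fin (K + 1) → ℕ × (ℕ → 𝒵) => fun j => v (σ j) :=
      measurable_pi_lambda _ fun j => measurable_pi_apply (σ j)
    have hmapσ : Measure.map (fun v : Fin (K + 1) → ℕ × (ℕ → 𝒵) => fun j => v (σ j)) ν = ν := by
      rw [hν, Measure.map_map hcσ hDmeas]
      exact hgroup σ
    have h1 : ∫ v, g 0 v ∂ν = ∫ v, g 0 (fun j => v (σ j)) ∂ν := by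
      conv_lhs => rw [← hmapσ]
      exact integral_map hcσ.aemeasurable (hgmeas 0).aestronglyMeasurable
    rw [h1]
    apply integral_congr_ae
    filter_upwards with v
    rw [hgcomp σ 0 v, hσ, Equiv.swap_apply_left]
  -- sum over the groups
  have hcard : (Finset.univ : Finset (Fin (K + 1))).card = K + 1 := by simp
  have hsum : ((K : ℝ) + 1) * ∫ v, g 0 v ∂ν ≤ 1 := by
    have h1 : ∑ k : Fin (K + 1), ∫ v, g k v ∂ν = ((K : ℝ) + 1) * ∫ v, g 0 v ∂ν := by
      rw [Finset.sum_congr rfl fun k _ => hswap k]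
      rw [Finset.sum_const, hcard, nsmul_eq_mul]
      push_cast
      try rfl
      try ring
    have h2 : ∑ k : Fin (K + 1), ∫ v, g k v ∂ν = ∫ v, ∑ k, g k v ∂ν :=
      (integral_finset_sum _ fun k _ => hint k).symm
    have h3 : ∫ v, ∑ k : Fin (K + 1), g k v ∂ν ≤ ∫ _, (1 : ℝ) ∂ν :=
      integral_mono (integrable_finset_sum _ fun k _ => hint k) (integrable_const 1)
        fun v => hsum_le v
    rw [integral_const, probReal_univ, smul_eq_mul, mul_one] at h3
    linarith [h1, h2, h3]
  -- identify the LHS with ∫ g 0 dν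
  have hLHS : (∫ ω,
        ((1 / (N 0 ω : ℝ)) * ∑ i' ∈ Finset.range (N 0 ω),
          (if A (Z 0 i' ω) (f fun k => (N k ω, fun i => Z k i ω)) then (1 : ℝ) else 0))
        / (∑ k : Fin (K + 1), (1 / (N k ω : ℝ)) * ∑ i' ∈ Finset.range (N k ω),
          (if A (Z k i' ω) (f fun k' => (N k' ω, fun i => Z k' i ω)) then (1 : ℝ) else 0)) ∂μ)
      = ∫ v, g 0 v ∂ν := by
    rw [hν, integral_map hDmeas.aemeasurable (hgmeas 0).aestronglyMeasurable]
  have hpos : (0 : ℝ) < (K : ℝ) + 1 := by positivity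
  rw [hLHS, le_div_iff₀ hpos]
  linarith [hsum]
end
end

section
/- Weighted exchangeability e-value bound: let (G_0,Z_0), (G_1,Z_1), ..., (G_K,Z_K) be independent with (G_k,Z_k) ~ P for k ≥ 1 and (G_0,Z_0) drawn from the tilted distribution with density w(g) with respect to P (where w = dP̃_G/dP_G depends only on g). Let T be a statistic depending only on the unordered multiset {(G_0,Z_0),...,(G_K,Z_K)} (and possibly independent auxiliary data). Define p_k = w(G_k)/(Σ_{l=0}^K w(G_l)) and indicator events A_k depending on (G_k,Z_k) and T. Then E[ 1{A_0} / (Σ_{k=0}^K p_k · 1{A_k}) ] ≤ 1, with 0/0 := 0. -/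
open MeasureTheory ProbabilityTheory Finset
open scoped ENNReal Classical

noncomputable section

section helpers
variable {ι : Type*} [Fintype ι] {α : Type*} [MeasurableSpace α]

lemma pi_restrict_box (μs : ι → Measure α) [∀ i, IsFiniteMeasure (μs i)]
    (s : ι → Set α) :
    Measure.pi (fun i => (μs i).restrict (s i)) = (Measure.pi μs).restrict (Set.pi Set.univ s) := by
  refine Measure.pi_eq (fun t ht => ?_)
  rw [Measure.restrict_apply (MeasurableSet.univ_pi ht), ← Set.pi_inter_distrib,
    Measure.pi_pi]
  exact Finset.prod_congr rfl (fun i _ => (Measure.restrict_apply (ht i)).symm)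

lemma map_eval_pi' [DecidableEq ι] (μs : ι → Measure α) [∀ i, IsFiniteMeasure (μs i)] (i : ι) :
    Measure.map (Function.eval i) (Measure.pi μs)
      = (∏ k ∈ Finset.univ.erase i, μs k Set.univ) • μs i := by
  ext t ht
  rw [Measure.map_apply (measurable_pi_apply i) ht, Measure.smul_apply, smul_eq_mul]
  have hpre : Function.eval i ⁻¹' t
      = Set.pi Set.univ (Function.update (fun _ => (Set.univ : Set α)) i t) :=
    Set.eval_preimage
  rw [hpre, Measure.pi_pi, ← Finset.mul_prod_erase Finset.univ _ (Finset.mem_univ i),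
    Function.update_self, mul_comm]
  congr 1
  refine Finset.prod_congr rfl (fun k hk => ?_)
  rw [Function.update_of_ne (Finset.ne_of_mem_erase hk)]

lemma lintegral_eval_pi [DecidableEq ι] (μs : ι → Measure α) [∀ i, IsFiniteMeasure (μs i)] (i : ι)
    (g : α → ℝ≥0∞) (hg : Measurable g) :
    ∫⁻ v, g (v i) ∂Measure.pi μs
      = (∏ k ∈ Finset.univ.erase i, μs k Set.univ) * ∫⁻ x, g x ∂μs i := by
  rw [← lintegral_map hg (measurable_pi_apply i), map_eval_pi', lintegral_smul_measure, smul_eq_mul]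

lemma map_perm_pi (P : Measure α) [IsProbabilityMeasure P] (σ : Equiv.Perm ι) :
    Measure.map (fun (v : ι → α) k => v (σ k)) (Measure.pi fun _ => P)
      = Measure.pi fun _ => P := by
  refine (Measure.pi_eq (fun s hs => ?_)).symm
  rw [Measure.map_apply (measurable_pi_lambda _ fun k => measurable_pi_apply (σ k))
    (MeasurableSet.univ_pi hs)]
  have hpre : (fun (v : ι → α) k => v (σ k)) ⁻¹' Set.pi Set.univ s
      = Set.pi Set.univ (fun j => s (σ.symm j)) := by
    ext v
    simp only [Set.mem_preimage, Set.mem_univ_pi]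
    constructor
    · intro h j; simpa using h (σ.symm j)
    · intro h k; simpa using h (σ k)
  rw [hpre, Measure.pi_pi]
  exact Equiv.prod_comp σ.symm (fun i => P (s i))

end helpers

/-- weighted exchangeability e-value bound. Let
`(G_0,Z_0), …, (G_K,Z_K)` be independent, with `(G_k,Z_k) ∼ P` for `k ≥ 1` and
`(G_0,Z_0)` drawn from the `w`-tilted distribution (density `w(g)` w.r.t. `P`). If `T`
depends only on the unordered multiset of the points, then with
`p_k = w(G_k)/Σ_l w(G_l)` and events `A_k = A((G_k,Z_k), T)`,
`E[1{A_0} / (Σ_k p_k 1{A_k})] ≤ 1` (with `0/0 := 0`). -/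
theorem weighted_exchangeability_evalue
    {Ω 𝒢 𝒵 : Type*} [MeasurableSpace Ω] [MeasurableSpace 𝒢] [MeasurableSpace 𝒵]
    (μ : Measure Ω) [IsProbabilityMeasure μ] (K : ℕ)
    (P : Measure (𝒢 × 𝒵)) [IsProbabilityMeasure P]
    (w : 𝒢 → ℝ) (hw_nn : ∀ g, 0 ≤ w g) (hw_meas : Measurable w)
    (GZ : Fin (K + 1) → Ω → 𝒢 × 𝒵) (hGZ : ∀ k, Measurable (GZ k))
    (hindep : iIndepFun GZ μ)
    (hlaw0 : Measure.map (GZ 0) μ = P.withDensity fun p => ENNReal.ofReal (w p.1))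
    (hlaw : ∀ k : Fin (K + 1), k ≠ 0 → Measure.map (GZ k) μ = P)
    -- `T` is a symmetric (multiset) function of the K+1 points
    (f : (Fin (K + 1) → 𝒢 × 𝒵) → ℝ) (hf : Measurable f)
    (hsym : ∀ (σ : Equiv.Perm (Fin (K + 1))) (v : Fin (K + 1) → 𝒢 × 𝒵),
      f (fun k => v (σ k)) = f v)
    (A : 𝒢 × 𝒵 → ℝ → Prop) (hA : MeasurableSet {p : (𝒢 × 𝒵) × ℝ | A p.1 p.2}) :
    (∫ ω,
        (if A (GZ 0 ω) (f fun k => GZ k ω) then (1 : ℝ) else 0)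
        / (∑ k : Fin (K + 1),
            (w (GZ k ω).1 / ∑ l : Fin (K + 1), w (GZ l ω).1) *
              (if A (GZ k ω) (f fun k' => GZ k' ω) then (1 : ℝ) else 0)) ∂μ)
      ≤ 1 := by
  classical
  let g : 𝒢 × 𝒵 → ℝ≥0∞ := fun p => ENNReal.ofReal (w p.1)
  have hg : Measurable g := (hw_meas.comp measurable_fst).ennreal_ofReal
  let lamP : Measure (Fin (K + 1) → 𝒢 × 𝒵) := Measure.pi fun _ => P
  let ν : Fin (K + 1) → Measure (𝒢 × 𝒵) := fun k => Measure.map (GZ k) μ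
  haveI hprob : ∀ k, IsProbabilityMeasure (ν k) :=
    fun k => Measure.isProbabilityMeasure_map (hGZ k).aemeasurable
  -- real-valued auxiliary functions
  let ind : (Fin (K + 1) → 𝒢 × 𝒵) → Fin (K + 1) → ℝ := fun v j => if A (v j) (f v) then 1 else 0
  let Wf : (Fin (K + 1) → 𝒢 × 𝒵) → ℝ := fun v => ∑ l : Fin (K + 1), w (v l).1
  let D : (Fin (K + 1) → 𝒢 × 𝒵) → ℝ := fun v => ∑ k : Fin (K + 1), (w (v k).1 / Wf v) * ind v k
  let F : (Fin (K + 1) → 𝒢 × 𝒵) → ℝ := fun v => ind v 0 / D v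
  have hind_nn : ∀ v j, 0 ≤ ind v j := fun v j => by
    simp only [ind]; split <;> norm_num
  have hind_le : ∀ v j, ind v j ≤ 1 := fun v j => by
    simp only [ind]; split <;> norm_num
  have hD_nn : ∀ v, 0 ≤ D v := fun v =>
    Finset.sum_nonneg fun k _ =>
      mul_nonneg (div_nonneg (hw_nn _) (Finset.sum_nonneg fun l _ => hw_nn _)) (hind_nn v k)
  have hF_nn : ∀ v, 0 ≤ F v := fun v => div_nonneg (hind_nn v 0) (hD_nn v)
  -- measurability
  have hindm : ∀ j, Measurable fun v : Fin (K + 1) → 𝒢 × 𝒵 => ind v j := by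
    intro j
    have h1 : Measurable fun v : Fin (K + 1) → 𝒢 × 𝒵 => ((v j, f v) : (𝒢 × 𝒵) × ℝ) :=
      (measurable_pi_apply j).prodMk hf
    exact Measurable.ite (hA.preimage h1) measurable_const measurable_const
  have hwm : ∀ j, Measurable fun v : Fin (K + 1) → 𝒢 × 𝒵 => w (v j).1 :=
    fun j => hw_meas.comp (measurable_fst.comp (measurable_pi_apply j))
  have hWm : Measurable Wf := Finset.measurable_sum _ fun l _ => hwm l
  have hDm : Measurable D :=
    Finset.measurable_sum _ fun k _ => ((hwm k).div hWm).mul (hindm k)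
  have hFm : Measurable F := (hindm 0).div hDm
  have hX : Measurable fun ω => (fun k => GZ k ω : Fin (K + 1) → 𝒢 × 𝒵) := measurable_pi_lambda _ hGZ
  -- the joint law is the product of the marginals
  have hjoint : Measure.map (fun ω => (fun k => GZ k ω : Fin (K + 1) → 𝒢 × 𝒵)) μ = Measure.pi ν := by
    refine (Measure.pi_eq (fun s hs => ?_)).symm
    rw [Measure.map_apply hX (MeasurableSet.univ_pi hs)]
    have hpre : (fun ω => (fun k => GZ k ω : Fin (K + 1) → 𝒢 × 𝒵)) ⁻¹' Set.pi Set.univ s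
        = ⋂ k ∈ Finset.univ, GZ k ⁻¹' s k := by
      ext ω; simp [Set.mem_univ_pi]
    rw [hpre, hindep.measure_inter_preimage_eq_mul Finset.univ (fun k _ => hs k)]
    exact Finset.prod_congr rfl fun k _ =>
      (Measure.map_apply (hGZ k) (hs k)).symm
  -- the product of the marginals is the w-tilted product measure
  have hdens : Measure.pi ν = lamP.withDensity fun v => g (v 0) := by
    refine Measure.pi_eq (fun s hs => ?_)
    rw [withDensity_apply _ (MeasurableSet.univ_pi hs)]
    have hres : lamP.restrict (Set.pi Set.univ s)
        = Measure.pi fun i => P.restrict (s i) := (pi_restrict_box _ s).symm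
    rw [hres, lintegral_eval_pi _ 0 g hg,
      ← Finset.mul_prod_erase Finset.univ (fun k => ν k (s k)) (Finset.mem_univ 0)]
    have h0 : ν 0 (s 0) = ∫⁻ x, g x ∂P.restrict (s 0) := by
      rw [show ν 0 = P.withDensity g from hlaw0, withDensity_apply _ (hs 0)]
    rw [mul_comm]
    congr 1
    · exact h0.symm
    · refine Finset.prod_congr rfl fun k hk => ?_
      rw [Measure.restrict_apply_univ, show ν k = P from hlaw k (Finset.ne_of_mem_erase hk)]
  -- the main quantity as a lintegral over the product space
  set L : ℝ≥0∞ := ∫⁻ v, ENNReal.ofReal (F v) ∂Measure.pi ν with hLdef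
  -- permutation invariance
  have hperm : ∀ j : Fin (K + 1),
      L = ∫⁻ v, g (v j) * ENNReal.ofReal (ind v j / D v) ∂lamP := by
    intro j
    set σ : Equiv.Perm (Fin (K + 1)) := Equiv.swap 0 j with hσ
    have hσ0 : σ 0 = j := Equiv.swap_apply_left 0 j
    have hg0 : Measurable fun v : Fin (K + 1) → 𝒢 × 𝒵 => g (v 0) :=
      hg.comp (measurable_pi_apply 0)
    have hstep1 : L = ∫⁻ v, g (v 0) * ENNReal.ofReal (F v) ∂lamP := by
      rw [hLdef, hdens, lintegral_withDensity_eq_lintegral_mul _ hg0 hFm.ennreal_ofReal]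
      rfl
    have hstep2 : (∫⁻ v, g (v 0) * ENNReal.ofReal (F v) ∂lamP)
        = ∫⁻ v, g ((fun k => v (σ k)) 0) * ENNReal.ofReal (F fun k => v (σ k)) ∂lamP := by
      have hmeasδ : Measurable fun v : Fin (K + 1) → 𝒢 × 𝒵 =>
          g (v 0) * ENNReal.ofReal (F v) := hg0.mul hFm.ennreal_ofReal
      have hTσ : Measurable fun (v : Fin (K + 1) → 𝒢 × 𝒵) k => v (σ k) :=
        measurable_pi_lambda _ fun k => measurable_pi_apply (σ k)
      conv_lhs => rw [show lamP = Measure.map (fun (v : Fin (K + 1) → 𝒢 × 𝒵) k => v (σ k)) lamP from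
        (map_perm_pi P σ).symm]
      rw [lintegral_map hmeasδ hTσ]
    have hFσ : ∀ v : Fin (K + 1) → 𝒢 × 𝒵, F (fun k => v (σ k)) = ind v j / D v := by
      intro v
      have hfv : f (fun k => v (σ k)) = f v := hsym σ v
      have hWσ : Wf (fun k => v (σ k)) = Wf v := Equiv.sum_comp σ (fun l => w (v l).1)
      have hDσ : D (fun k => v (σ k)) = D v := by
        simp only [D, ind, hfv, hWσ]
        exact Equiv.sum_comp σ (fun k => (w (v k).1 / Wf v) * if A (v k) (f v) then 1 else 0)
      simp only [F, ind, hfv, hDσ, hσ0]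
    rw [hstep1, hstep2]
    refine lintegral_congr fun v => ?_
    simp only [hFσ, hσ0]
  -- pointwise bound for the symmetrized integrand
  have hptwise : ∀ v : Fin (K + 1) → 𝒢 × 𝒵,
      (∑ j : Fin (K + 1), g (v j) * ENNReal.ofReal (ind v j / D v))
        ≤ ∑ k : Fin (K + 1), g (v k) := by
    intro v
    have hterm : ∀ j, g (v j) * ENNReal.ofReal (ind v j / D v)
        = ENNReal.ofReal (w (v j).1 * (ind v j / D v)) := fun j =>
      (ENNReal.ofReal_mul (hw_nn _)).symm
    have hsum1 : (∑ j : Fin (K + 1), g (v j) * ENNReal.ofReal (ind v j / D v))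
        = ENNReal.ofReal (∑ j : Fin (K + 1), w (v j).1 * (ind v j / D v)) := by
      rw [ENNReal.ofReal_sum_of_nonneg fun j _ =>
        mul_nonneg (hw_nn _) (div_nonneg (hind_nn v j) (hD_nn v))]
      exact Finset.sum_congr rfl fun j _ => hterm j
    have hsum2 : (∑ k : Fin (K + 1), g (v k)) = ENNReal.ofReal (Wf v) :=
      (ENNReal.ofReal_sum_of_nonneg fun k _ => hw_nn _).symm
    rw [hsum1, hsum2]
    refine ENNReal.ofReal_le_ofReal ?_
    -- real algebra
    set S : ℝ := ∑ k : Fin (K + 1), w (v k).1 * ind v k with hSdef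
    have hS_nn : 0 ≤ S := Finset.sum_nonneg fun k _ => mul_nonneg (hw_nn _) (hind_nn v k)
    have hW_nn : 0 ≤ Wf v := Finset.sum_nonneg fun l _ => hw_nn _
    have hSW : S ≤ Wf v := Finset.sum_le_sum fun k _ => by
      calc w (v k).1 * ind v k ≤ w (v k).1 * 1 :=
            mul_le_mul_of_nonneg_left (hind_le v k) (hw_nn _)
        _ = w (v k).1 := mul_one _
    have hDv : D v = S / Wf v := by
      simp only [D, hSdef, Finset.sum_div]
      exact Finset.sum_congr rfl fun k _ => div_mul_eq_mul_div _ _ _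
    have hLHS : (∑ j : Fin (K + 1), w (v j).1 * (ind v j / D v)) = S / D v := by
      simp only [hSdef, Finset.sum_div]
      exact Finset.sum_congr rfl fun j _ => (mul_div_assoc _ _ _).symm
    rw [hLHS, hDv]
    rcases eq_or_lt_of_le hS_nn with hS0 | hSpos
    · rw [← hS0]; simpa using hW_nn
    · have : S / (S / Wf v) = Wf v := by
        rw [div_div_eq_mul_div, mul_comm, mul_div_assoc, div_self (ne_of_gt hSpos), mul_one]
      rw [this]
  -- summing the permuted representations
  have hmeas_term : ∀ j : Fin (K + 1),
      Measurable fun v : Fin (K + 1) → 𝒢 × 𝒵 => g (v j) * ENNReal.ofReal (ind v j / D v) := fun j =>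
    (hg.comp (measurable_pi_apply j)).mul ((hindm j).div hDm).ennreal_ofReal
  have hKL : (K + 1 : ℝ≥0∞) * L
      = ∫⁻ v, ∑ j : Fin (K + 1), g (v j) * ENNReal.ofReal (ind v j / D v) ∂lamP := by
    rw [lintegral_finset_sum _ fun j _ => hmeas_term j]
    have : ∀ j : Fin (K + 1),
        (∫⁻ v, g (v j) * ENNReal.ofReal (ind v j / D v) ∂lamP) = L :=
      fun j => (hperm j).symm
    rw [Finset.sum_congr rfl fun j _ => this j]
    simp [Finset.sum_const, Finset.card_univ, nsmul_eq_mul, Nat.cast_add, Nat.cast_one]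
  have hint_g : ∫⁻ x, g x ∂P = 1 := by
    have : (P.withDensity g) Set.univ = 1 := by
      rw [← hlaw0]
      exact measure_univ
    rwa [withDensity_apply _ MeasurableSet.univ, Measure.restrict_univ] at this
  have hbound : (∫⁻ v, ∑ j : Fin (K + 1), g (v j) * ENNReal.ofReal (ind v j / D v) ∂lamP)
      ≤ (K + 1 : ℝ≥0∞) := by
    calc (∫⁻ v, ∑ j : Fin (K + 1), g (v j) * ENNReal.ofReal (ind v j / D v) ∂lamP)
        ≤ ∫⁻ v, ∑ k : Fin (K + 1), g (v k) ∂lamP := lintegral_mono hptwise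
      _ = ∑ k : Fin (K + 1), ∫⁻ v, g (v k) ∂lamP :=
          lintegral_finset_sum _ fun k _ => hg.comp (measurable_pi_apply k)
      _ = ∑ _k : Fin (K + 1), (1 : ℝ≥0∞) := by
          refine Finset.sum_congr rfl fun k _ => ?_
          rw [lintegral_eval_pi _ k g hg, hint_g]
          simp
      _ = (K + 1 : ℝ≥0∞) := by simp
  have hL1 : L ≤ 1 := by
    have hne : (K + 1 : ℝ≥0∞) ≠ 0 := by
      have h1 : (0 : ℝ≥0∞) < K + 1 := lt_of_lt_of_le zero_lt_one le_add_self
      exact h1.ne'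
    have hnetop : (K + 1 : ℝ≥0∞) ≠ ⊤ :=
      ENNReal.add_ne_top.mpr ⟨ENNReal.natCast_ne_top K, ENNReal.one_ne_top⟩
    have h : (K + 1 : ℝ≥0∞) * L ≤ (K + 1 : ℝ≥0∞) * 1 := by
      rw [hKL, mul_one]; exact hbound
    exact (ENNReal.mul_le_mul_iff_right hne hnetop).mp h
  -- back to the Bochner integral
  have hgoal : (∫ ω,
        (if A (GZ 0 ω) (f fun k => GZ k ω) then (1 : ℝ) else 0)
        / (∑ k : Fin (K + 1),
            (w (GZ k ω).1 / ∑ l : Fin (K + 1), w (GZ l ω).1) *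
              (if A (GZ k ω) (f fun k' => GZ k' ω) then (1 : ℝ) else 0)) ∂μ)
      = ∫ ω, F (fun k => GZ k ω) ∂μ := rfl
  have hcomp : AEStronglyMeasurable (fun ω => F fun k => GZ k ω) μ :=
    (hFm.comp hX).aestronglyMeasurable
  rw [hgoal, integral_eq_lintegral_of_nonneg_ae (f := fun ω => F fun k => GZ k ω)
    (Filter.Eventually.of_forall fun ω => (hF_nn (fun k => GZ k ω) : (0:Ω → ℝ) ω ≤ _)) hcomp]
  have hchg : (∫⁻ ω, ENNReal.ofReal (F fun k => GZ k ω) ∂μ) = L := by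
    rw [hLdef, ← hjoint, lintegral_map hFm.ennreal_ofReal hX]
  rw [hchg]
  calc L.toReal ≤ (1 : ℝ≥0∞).toReal := ENNReal.toReal_mono (by norm_num) hL1
    _ = 1 := by simp
end
end

section
/- Boosted e-BH preserves FDR: if (e_{j,i}) are nonnegative random variables satisfying the compound condition Σ E[e_{j,i} 1{H_{j,i} true}] ≤ n (with n the total number of hypotheses), and U ~ Unif(0,1) is independent of everything, then the e-BH procedure applied to the boosted values e_{j,i}^U = e_{j,i}/U at level α controls FDR ≤ α. -/
open MeasureTheory ProbabilityTheory Finset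
open scoped ENNReal Classical

noncomputable section

/-! ### Auxiliary lemmas about `kstar` and `eBHreject` -/

lemma kstar_spec {ι : Type*} (S : Finset ι) (α : ℝ) (e : ι → ℝ) :
    kstar S α e ≤ S.card ∧
      kstar S α e ≤ (S.filter (fun j => (S.card : ℝ) ≤ α * (kstar S α e) * e j)).card := by
  have h : kstar S α e ∈
      {k | k ≤ S.card ∧ k ≤ (S.filter (fun j => (S.card : ℝ) ≤ α * k * e j)).card} := by
    apply Nat.sSup_mem
    · exact ⟨0, by simp⟩
    · exact ⟨S.card, fun k hk => hk.1⟩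
  exact h

lemma le_kstar_aux {ι : Type*} {S : Finset ι} {α : ℝ} {e : ι → ℝ} {k : ℕ} (h1 : k ≤ S.card)
    (h2 : k ≤ (S.filter (fun j => (S.card : ℝ) ≤ α * k * e j)).card) : k ≤ kstar S α e :=
  le_csSup ⟨S.card, fun m hm => hm.1⟩ ⟨h1, h2⟩

lemma kstar_mono_aux {ι : Type*} (S : Finset ι) {α : ℝ} (hα : 0 ≤ α) {e e' : ι → ℝ}
    (h0 : ∀ j, 0 ≤ e j) (h : ∀ j, e j ≤ e' j) : kstar S α e ≤ kstar S α e' := by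
  apply csSup_le_csSup ⟨S.card, fun m hm => hm.1⟩ ⟨0, by simp⟩
  rintro k ⟨hk1, hk2⟩
  refine ⟨hk1, hk2.trans (Finset.card_le_card ?_)⟩
  intro j hj
  rw [Finset.mem_filter] at hj ⊢
  refine ⟨hj.1, hj.2.trans ?_⟩
  exact mul_le_mul_of_nonneg_left (h j) (by positivity)

lemma eBH_subset {ι : Type*} (S : Finset ι) {α : ℝ} (hα : 0 ≤ α) {e e' : ι → ℝ}
    (h0 : ∀ j, 0 ≤ e j) (h : ∀ j, e j ≤ e' j) : eBHreject S α e ⊆ eBHreject S α e' := by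
  intro j hj
  rw [eBHreject, Finset.mem_filter] at hj ⊢
  refine ⟨hj.1, hj.2.trans ?_⟩
  have hk : kstar S α e ≤ kstar S α e' := kstar_mono_aux S hα h0 h
  apply mul_le_mul (mul_le_mul_of_nonneg_left ?_ hα) (h j) (h0 j) (by positivity)
  exact_mod_cast hk

lemma rejected_bound {ι : Type*} (S : Finset ι) {α : ℝ} (hα : 0 ≤ α) {e : ι → ℝ}
    (h0 : ∀ j, 0 ≤ e j) {j : ι} (hj : j ∈ eBHreject S α e) :
    (S.card : ℝ) ≤ α * ((max (eBHreject S α e).card 1 : ℕ) : ℝ) * e j := by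
  rw [eBHreject, Finset.mem_filter] at hj
  refine hj.2.trans ?_
  have h1 : kstar S α e ≤ max (eBHreject S α e).card 1 :=
    le_max_iff.mpr (Or.inl (kstar_spec S α e).2)
  refine mul_le_mul_of_nonneg_right (mul_le_mul_of_nonneg_left ?_ hα) (h0 j)
  exact_mod_cast h1

/-! ### Measurability lemmas -/

lemma meas_of_cast {β : Type*} [MeasurableSpace β] {f : β → ℕ}
    (h : Measurable fun b => (f b : ℝ)) : Measurable f := by
  apply measurable_to_countable'
  intro m
  have heq : f ⁻¹' {m} = (fun b => (f b : ℝ)) ⁻¹' {(m : ℝ)} := by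
    ext b; simp [Nat.cast_inj]
  rw [heq]
  exact h (measurableSet_singleton _)

def Ncard {β : Type*} {n : ℕ} (α : ℝ) (E : β → Fin n → ℝ) (k : ℕ) (b : β) : ℕ :=
  ((Finset.univ : Finset (Fin n)).filter
    (fun j => (((Finset.univ : Finset (Fin n)).card : ℕ) : ℝ) ≤ α * k * E b j)).card

lemma meas_Ncard {β : Type*} [MeasurableSpace β] {n : ℕ} (α : ℝ) {E : β → Fin n → ℝ}
    (hE : ∀ j, Measurable fun b => E b j) (k : ℕ) : Measurable (Ncard α E k) := by
  apply meas_of_cast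
  have heq : ∀ b, ((Ncard α E k b : ℕ) : ℝ) = ∑ j : Fin n,
      if (((Finset.univ : Finset (Fin n)).card : ℕ) : ℝ) ≤ α * k * E b j then (1:ℝ) else 0 := by
    intro b
    rw [Ncard, Finset.card_filter]
    push_cast
    rfl
  simp only [heq]
  apply Finset.measurable_sum
  intro j _
  refine Measurable.ite ?_ measurable_const measurable_const
  exact measurableSet_le measurable_const ((hE j).const_mul _)

lemma meas_kstar {β : Type*} [MeasurableSpace β] {n : ℕ} (α : ℝ) {E : β → Fin n → ℝ}
    (hE : ∀ j, Measurable fun b => E b j) :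
    Measurable fun b => kstar (Finset.univ : Finset (Fin n)) α (E b) := by
  have hset : ∀ k : ℕ, MeasurableSet {b : β | k ≤ Ncard α E k b} :=
    fun k => (meas_Ncard α hE k) (MeasurableSet.of_discrete (s := Set.Ici k))
  apply measurable_to_countable'
  intro m
  have hchar : ∀ b : β, kstar (Finset.univ : Finset (Fin n)) α (E b) = m ↔
      ((m ≤ (Finset.univ : Finset (Fin n)).card ∧ m ≤ Ncard α E m b) ∧
        ∀ k ∈ Finset.range ((Finset.univ : Finset (Fin n)).card + 1),
          ¬ (m < k ∧ k ≤ Ncard α E k b)) := by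
    intro b
    constructor
    · rintro rfl
      obtain ⟨h1, h2⟩ := kstar_spec (Finset.univ : Finset (Fin n)) α (E b)
      refine ⟨⟨h1, h2⟩, ?_⟩
      rintro k hk ⟨hk1, hk2⟩
      have hle : k ≤ kstar (Finset.univ : Finset (Fin n)) α (E b) :=
        le_kstar_aux (Finset.mem_range_succ_iff.mp hk) hk2
      omega
    · rintro ⟨⟨hm1, hm2⟩, hub⟩
      refine le_antisymm ?_ (le_kstar_aux hm1 hm2)
      apply csSup_le ⟨0, by simp⟩
      intro k hk
      by_contra hlt
      push_neg at hlt
      exact hub k (Finset.mem_range_succ_iff.mpr hk.1) ⟨hlt, hk.2⟩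
  have hseteq : (fun b => kstar (Finset.univ : Finset (Fin n)) α (E b)) ⁻¹' {m} =
      {b : β | m ≤ (Finset.univ : Finset (Fin n)).card ∧ m ≤ Ncard α E m b} ∩
        ⋂ (k : ℕ), ⋂ (_ : k ∈ Finset.range ((Finset.univ : Finset (Fin n)).card + 1)),
          {b : β | ¬ (m < k ∧ k ≤ Ncard α E k b)} := by
    ext b
    simp only [Set.mem_preimage, Set.mem_singleton_iff, Set.mem_inter_iff, Set.mem_setOf_eq,
      Set.mem_iInter, hchar b]
  rw [hseteq]
  refine MeasurableSet.inter ?_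
    (MeasurableSet.iInter fun k => MeasurableSet.iInter fun _ => ?_)
  · by_cases hm : m ≤ (Finset.univ : Finset (Fin n)).card
    · have hsimp : {b : β | m ≤ (Finset.univ : Finset (Fin n)).card ∧ m ≤ Ncard α E m b}
          = {b : β | m ≤ Ncard α E m b} := by
        ext b; exact and_iff_right hm
      rw [hsimp]; exact hset m
    · have hsimp : {b : β | m ≤ (Finset.univ : Finset (Fin n)).card ∧ m ≤ Ncard α E m b}
          = (∅ : Set β) := by
        ext b
        simp only [Set.mem_setOf_eq, Set.mem_empty_iff_false, iff_false]
        exact fun h => hm h.1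
      rw [hsimp]; exact MeasurableSet.empty
  · have h' : MeasurableSet {b : β | m < k ∧ k ≤ Ncard α E k b} := by
      by_cases hmk : m < k
      · have hsimp : {b : β | m < k ∧ k ≤ Ncard α E k b}
            = {b : β | k ≤ Ncard α E k b} := by
          ext b; exact and_iff_right hmk
        rw [hsimp]; exact hset k
      · have hsimp : {b : β | m < k ∧ k ≤ Ncard α E k b} = (∅ : Set β) := by
          ext b
          simp only [Set.mem_setOf_eq, Set.mem_empty_iff_false, iff_false]
          exact fun h => hmk h.1
        rw [hsimp]; exact MeasurableSet.empty
    exact h'.compl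

lemma meas_cardrej {β : Type*} [MeasurableSpace β] {n : ℕ} (α : ℝ) {E : β → Fin n → ℝ}
    (hE : ∀ j, Measurable fun b => E b j) :
    Measurable fun b => (eBHreject (Finset.univ : Finset (Fin n)) α (E b)).card := by
  have heq : ∀ b, (eBHreject (Finset.univ : Finset (Fin n)) α (E b)).card
      = Ncard α E (kstar (Finset.univ : Finset (Fin n)) α (E b)) b := fun b => rfl
  apply measurable_to_countable'
  intro m
  have hseteq : (fun b => (eBHreject (Finset.univ : Finset (Fin n)) α (E b)).card) ⁻¹' {m} =
      ⋃ (k : ℕ), ((fun b => kstar (Finset.univ : Finset (Fin n)) α (E b)) ⁻¹' {k} ∩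
        (Ncard α E k) ⁻¹' {m}) := by
    ext b
    simp only [Set.mem_preimage, Set.mem_singleton_iff, Set.mem_iUnion, Set.mem_inter_iff]
    constructor
    · intro h
      exact ⟨kstar (Finset.univ : Finset (Fin n)) α (E b), rfl, by rw [← heq b]; exact h⟩
    · rintro ⟨k, hkb, hN⟩
      rw [heq b, hkb]
      exact hN
  rw [hseteq]
  exact MeasurableSet.iUnion fun k =>
    ((meas_kstar α hE (measurableSet_singleton _)).inter
      ((meas_Ncard α hE k) (measurableSet_singleton _)))

lemma meas_F {β : Type*} [MeasurableSpace β] {n : ℕ} (α : ℝ) {E : β → Fin n → ℝ}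
    (hE : ∀ j, Measurable fun b => E b j) (truth : Fin n → Prop) :
    Measurable fun b =>
      (((eBHreject (Finset.univ : Finset (Fin n)) α (E b)).filter (fun j => truth j)).card : ℝ)
        / ((max (eBHreject (Finset.univ : Finset (Fin n)) α (E b)).card 1 : ℕ) : ℝ) := by
  apply Measurable.div
  · have heq : ∀ b,
        ((((eBHreject (Finset.univ : Finset (Fin n)) α (E b)).filter
            (fun j => truth j)).card : ℕ) : ℝ)
        = ∑ j : Fin n, if j ∈ eBHreject (Finset.univ : Finset (Fin n)) α (E b) ∧ truth j
            then (1:ℝ) else 0 := by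
      intro b
      rw [show (eBHreject (Finset.univ : Finset (Fin n)) α (E b)).filter (fun j => truth j)
            = Finset.univ.filter
              (fun j => j ∈ eBHreject (Finset.univ : Finset (Fin n)) α (E b) ∧ truth j) from by
          ext j; simp [Finset.mem_filter]]
      rw [Finset.card_filter]
      push_cast
      rfl
    simp only [heq]
    apply Finset.measurable_sum
    intro j _
    refine Measurable.ite ?_ measurable_const measurable_const
    by_cases ht : truth j
    · simp only [ht, and_true]
      have hmemeq : {b : β | j ∈ eBHreject (Finset.univ : Finset (Fin n)) α (E b)}
          = {b : β | (((Finset.univ : Finset (Fin n)).card : ℕ) : ℝ)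
              ≤ α * (kstar (Finset.univ : Finset (Fin n)) α (E b) : ℕ) * E b j} := by
        ext b; simp [eBHreject, Finset.mem_filter]
      rw [hmemeq]
      refine measurableSet_le measurable_const (Measurable.mul ?_ (hE j))
      exact (measurable_of_countable (fun m : ℕ => α * (m : ℝ))).comp (meas_kstar α hE)
    · simp only [ht, and_false, Set.setOf_false]
      exact MeasurableSet.empty
  · exact (measurable_of_countable (fun m : ℕ => ((max m 1 : ℕ) : ℝ))).comp (meas_cardrej α hE)

/-! ### The core analytic lemma -/

lemma core_int {k : ℝ → ℕ} (hk : Measurable k)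
    (hanti : ∀ u ∈ Set.Ioo (0:ℝ) 1, ∀ u' ∈ Set.Ioo (0:ℝ) 1, u ≤ u' → k u' ≤ k u)
    (hk1 : ∀ u, 1 ≤ k u) {c : ℝ} (hc : 0 ≤ c) :
    (∫ u in Set.Ioo (0:ℝ) 1, (if u ≤ c * (k u : ℝ) then ((k u : ℝ))⁻¹ else 0)) ≤ c := by
  haveI hfin : IsFiniteMeasure ((volume : Measure ℝ).restrict (Set.Ioo 0 1)) := by
    constructor
    rw [Measure.restrict_apply_univ, Real.volume_Ioo]
    exact ENNReal.ofReal_lt_top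
  have hkcast : Measurable fun u : ℝ => (k u : ℝ) :=
    (measurable_of_countable (fun m : ℕ => (m : ℝ))).comp hk
  have hfm : Measurable fun u : ℝ => (if u ≤ c * (k u : ℝ) then ((k u : ℝ))⁻¹ else 0) :=
    Measurable.ite (measurableSet_le measurable_id (hkcast.const_mul c))
      hkcast.inv measurable_const
  have hf0 : ∀ u : ℝ, 0 ≤ (if u ≤ c * (k u : ℝ) then ((k u : ℝ))⁻¹ else 0) := by
    intro u
    split_ifs
    · exact inv_nonneg.mpr (Nat.cast_nonneg _)
    · exact le_refl 0
  have hf1 : ∀ u : ℝ, (if u ≤ c * (k u : ℝ) then ((k u : ℝ))⁻¹ else 0) ≤ 1 := by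
    intro u
    split_ifs
    · exact inv_le_one_of_one_le₀ (by exact_mod_cast hk1 u)
    · exact zero_le_one
  have hfint : Integrable (fun u : ℝ => (if u ≤ c * (k u : ℝ) then ((k u : ℝ))⁻¹ else 0))
      ((volume : Measure ℝ).restrict (Set.Ioo 0 1)) :=
    Integrable.mono' (integrable_const 1) hfm.aestronglyMeasurable
      (ae_of_all _ fun u => by rw [Real.norm_eq_abs, abs_of_nonneg (hf0 u)]; exact hf1 u)
  by_cases hA : (Set.Ioo (0:ℝ) 1 ∩ {u : ℝ | u ≤ c * (k u : ℝ)}).Nonempty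
  · obtain ⟨a, haI, haC⟩ := hA
    have haC' : a ≤ c * (k a : ℝ) := haC
    have hc0 : 0 < c := by
      by_contra h
      push_neg at h
      nlinarith [mul_nonneg (neg_nonneg.mpr h) (Nat.cast_nonneg (k a)), haC', haI.1]
    set A : Set ℝ := Set.Ioo (0:ℝ) 1 ∩ {u : ℝ | u ≤ c * (k u : ℝ)} with hAdef
    have hbdd : BddAbove A := ⟨1, fun x hx => hx.1.2.le⟩
    set t : ℝ := sSup A with ht
    have haA : a ∈ A := ⟨haI, haC⟩
    have htpos : 0 < t := lt_of_lt_of_le haI.1 (le_csSup hbdd haA)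
    have ht1 : t ≤ 1 := csSup_le ⟨a, haA⟩ fun x hx => hx.1.2.le
    have hkey : ∀ u ∈ A, t ≤ c * (k u : ℝ) := by
      intro u hu
      apply csSup_le ⟨a, haA⟩
      intro x hx
      rcases le_total x u with h | h
      · exact le_trans h hu.2
      · have hk' : k x ≤ k u := hanti u hu.1 x hx.1 h
        refine hx.2.trans (mul_le_mul_of_nonneg_left ?_ hc0.le)
        exact_mod_cast hk'
    have hpt : ∀ u ∈ Set.Ioo (0:ℝ) 1,
        (if u ≤ c * (k u : ℝ) then ((k u : ℝ))⁻¹ else 0)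
          ≤ Set.indicator (Set.Ioc 0 t) (fun _ => c / t) u := by
      intro u hu
      by_cases h : u ≤ c * (k u : ℝ)
      · have huA : u ∈ A := ⟨hu, h⟩
        have hmem' : u ∈ Set.Ioc (0:ℝ) t := ⟨hu.1, le_csSup hbdd huA⟩
        rw [if_pos h, Set.indicator_of_mem hmem']
        have hku : (0:ℝ) < (k u : ℝ) := by exact_mod_cast hk1 u
        rw [inv_eq_one_div, div_le_div_iff₀ hku htpos]
        have hkeyu := hkey u huA
        linarith
      · rw [if_neg h]
        exact Set.indicator_nonneg (fun x _ => div_nonneg hc0.le htpos.le) u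
    have hgint : Integrable (Set.indicator (Set.Ioc 0 t) fun _ => c / t) volume := by
      rw [integrable_indicator_iff measurableSet_Ioc]
      apply (integrableOn_const_iff (C := c / t)).mpr
      exact Or.inr measure_Ioc_lt_top
    calc (∫ u in Set.Ioo (0:ℝ) 1, (if u ≤ c * (k u : ℝ) then ((k u : ℝ))⁻¹ else 0))
        ≤ ∫ u in Set.Ioo (0:ℝ) 1, Set.indicator (Set.Ioc 0 t) (fun _ => c / t) u :=
          setIntegral_mono_on hfint hgint.integrableOn measurableSet_Ioo hpt
      _ ≤ ∫ u, Set.indicator (Set.Ioc 0 t) (fun _ => c / t) u :=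
          setIntegral_le_integral hgint
            (ae_of_all _ fun u => Set.indicator_nonneg (fun x _ => div_nonneg hc0.le htpos.le) u)
      _ = (volume (Set.Ioc 0 t)).toReal • (c / t) := integral_indicator_const _ measurableSet_Ioc
      _ = t * (c / t) := by
          rw [Real.volume_Ioc, sub_zero, ENNReal.toReal_ofReal htpos.le, smul_eq_mul]
      _ = c := by field_simp
  · have hzero : ∀ u ∈ Set.Ioo (0:ℝ) 1,
        (if u ≤ c * (k u : ℝ) then ((k u : ℝ))⁻¹ else 0) = (0:ℝ) := by
      intro u hu
      rw [if_neg]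
      intro h
      exact hA ⟨u, hu, h⟩
    calc (∫ u in Set.Ioo (0:ℝ) 1, (if u ≤ c * (k u : ℝ) then ((k u : ℝ))⁻¹ else 0))
        = ∫ _ in Set.Ioo (0:ℝ) 1, (0:ℝ) := setIntegral_congr_fun measurableSet_Ioo hzero
      _ = 0 := integral_zero _ _
      _ ≤ c := hc

/-! ### The deterministic inner bound -/

lemma inner_bound {n : ℕ} (hn : 0 < n) {α : ℝ} (hα : 0 < α) (truth : Fin n → Prop)
    (v : Fin n → ℝ) (hv : ∀ j, 0 ≤ v j) :
    (∫ u in Set.Ioo (0:ℝ) 1,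
        (((eBHreject (Finset.univ : Finset (Fin n)) α (fun j => v j / u)).filter
            (fun j => truth j)).card : ℝ)
          / ((max (eBHreject (Finset.univ : Finset (Fin n)) α
              (fun j => v j / u)).card 1 : ℕ) : ℝ))
      ≤ ∑ j : Fin n, (if truth j then α * v j / n else 0) := by
  haveI hfin : IsFiniteMeasure ((volume : Measure ℝ).restrict (Set.Ioo 0 1)) := by
    constructor
    rw [Measure.restrict_apply_univ, Real.volume_Ioo]
    exact ENNReal.ofReal_lt_top
  have hn' : (0:ℝ) < n := by exact_mod_cast hn
  have hEmeas : ∀ j : Fin n, Measurable fun u : ℝ => v j / u :=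
    fun j => measurable_const.div measurable_id
  set R : ℝ → Finset (Fin n) :=
    fun u => eBHreject (Finset.univ : Finset (Fin n)) α (fun j => v j / u) with hR
  set K : ℝ → ℕ := fun u => max (R u).card 1 with hKdef
  have hKmeas : Measurable K :=
    (measurable_of_countable (fun m : ℕ => max m 1)).comp
      (meas_cardrej (E := fun u (j : Fin n) => v j / u) α hEmeas)
  have hKcastmeas : Measurable fun u : ℝ => (K u : ℝ) :=
    (measurable_of_countable (fun m : ℕ => (m : ℝ))).comp hKmeas
  have hK1 : ∀ u, 1 ≤ K u := fun u => le_max_right _ _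
  have hKcast : ∀ u, (1:ℝ) ≤ (K u : ℝ) := fun u => by exact_mod_cast hK1 u
  have hKanti : ∀ u ∈ Set.Ioo (0:ℝ) 1, ∀ u' ∈ Set.Ioo (0:ℝ) 1, u ≤ u' → K u' ≤ K u := by
    intro u hu u' hu' hle
    have hsub : R u' ⊆ R u := by
      apply eBH_subset _ hα.le (fun j => div_nonneg (hv j) hu'.1.le)
      intro j
      rw [div_le_div_iff₀ hu'.1 hu.1]
      exact mul_le_mul_of_nonneg_left hle (hv j)
    exact max_le_max (Finset.card_le_card hsub) le_rfl
  have hmem : ∀ u ∈ Set.Ioo (0:ℝ) 1, ∀ j : Fin n, j ∈ R u →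
      u ≤ (α * v j / n) * (K u : ℝ) := by
    intro u hu j hj
    have hb := rejected_bound (Finset.univ : Finset (Fin n)) hα.le
      (fun i => div_nonneg (hv i) hu.1.le) hj
    rw [Finset.card_fin] at hb
    have h2 : (n:ℝ) * u ≤ α * (K u : ℝ) * v j := by
      have h3 := mul_le_mul_of_nonneg_right hb hu.1.le
      rwa [mul_assoc, div_mul_cancel₀ _ (ne_of_gt hu.1)] at h3
    rw [div_mul_eq_mul_div, le_div_iff₀ hn']
    calc u * (n:ℝ) = (n:ℝ) * u := mul_comm _ _
      _ ≤ α * (K u : ℝ) * v j := h2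
      _ = α * v j * (K u : ℝ) := by ring
  set g : Fin n → ℝ → ℝ := fun j u =>
    if truth j then (if u ≤ (α * v j / n) * (K u : ℝ) then ((K u : ℝ))⁻¹ else 0) else 0 with hg
  have hgmeas : ∀ j, Measurable (g j) := by
    intro j
    by_cases ht : truth j
    · have : g j = fun u => if u ≤ (α * v j / n) * (K u : ℝ) then ((K u : ℝ))⁻¹ else 0 := by
        funext u; simp [hg, ht]
      rw [this]
      exact Measurable.ite (measurableSet_le measurable_id (hKcastmeas.const_mul _))
        hKcastmeas.inv measurable_const
    · have : g j = fun _ => (0:ℝ) := by funext u; simp [hg, ht]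
      rw [this]; exact measurable_const
  have hg0 : ∀ j u, 0 ≤ g j u := by
    intro j u
    simp only [hg]
    split_ifs
    · exact inv_nonneg.mpr (Nat.cast_nonneg _)
    · exact le_refl 0
    · exact le_refl 0
  have hg1 : ∀ j u, g j u ≤ 1 := by
    intro j u
    simp only [hg]
    split_ifs
    · exact inv_le_one_of_one_le₀ (hKcast u)
    · exact zero_le_one
    · exact zero_le_one
  have hgint : ∀ j, Integrable (g j) ((volume : Measure ℝ).restrict (Set.Ioo 0 1)) := fun j =>
    Integrable.mono' (integrable_const 1) (hgmeas j).aestronglyMeasurable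
      (ae_of_all _ fun u => by rw [Real.norm_eq_abs, abs_of_nonneg (hg0 j u)]; exact hg1 j u)
  set Fv : ℝ → ℝ := fun u =>
    (((R u).filter (fun j => truth j)).card : ℝ) / ((max (R u).card 1 : ℕ) : ℝ) with hFv
  have hFmeas : Measurable Fv :=
    meas_F (E := fun u (j : Fin n) => v j / u) α hEmeas truth
  have hFnn : ∀ u, 0 ≤ Fv u := fun u => div_nonneg (Nat.cast_nonneg _) (Nat.cast_nonneg _)
  have hFbd : ∀ u, Fv u ≤ (n:ℝ) := by
    intro u
    have h1 : ((((R u).filter (fun j => truth j)).card : ℕ) : ℝ) ≤ (n:ℝ) := by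
      exact_mod_cast le_trans (Finset.card_filter_le _ _)
        (le_trans (Finset.card_le_univ _) (le_of_eq (Finset.card_fin n)))
    have h2 : (1:ℝ) ≤ ((max (R u).card 1 : ℕ) : ℝ) := by exact_mod_cast le_max_right _ _
    calc Fv u ≤ (n:ℝ)/1 := div_le_div₀ (Nat.cast_nonneg n) h1 one_pos h2
      _ = (n:ℝ) := div_one _
  have hFint : Integrable Fv ((volume : Measure ℝ).restrict (Set.Ioo 0 1)) :=
    Integrable.mono' (integrable_const (n:ℝ)) hFmeas.aestronglyMeasurable
      (ae_of_all _ fun u => by rw [Real.norm_eq_abs, abs_of_nonneg (hFnn u)]; exact hFbd u)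
  have hpt : ∀ u ∈ Set.Ioo (0:ℝ) 1, Fv u ≤ ∑ j : Fin n, g j u := by
    intro u hu
    have hnum : (((R u).filter (fun j => truth j)).card : ℝ)
        = ∑ j : Fin n, (if j ∈ R u ∧ truth j then (1:ℝ) else 0) := by
      rw [show (R u).filter (fun j => truth j)
            = Finset.univ.filter (fun j => j ∈ R u ∧ truth j) from by
          ext j; simp [Finset.mem_filter]]
      rw [Finset.card_filter]
      push_cast
      rfl
    have hFu : Fv u = ∑ j : Fin n,
        (if j ∈ R u ∧ truth j then (1:ℝ) else 0) / (K u : ℝ) := by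
      simp only [hFv]
      rw [hnum, Finset.sum_div]
    rw [hFu]
    apply Finset.sum_le_sum
    intro j _
    by_cases ht : truth j
    · by_cases hjR : j ∈ R u
      · have hcond := hmem u hu j hjR
        have hgj : g j u = ((K u : ℝ))⁻¹ := by
          simp only [hg]
          rw [if_pos ht, if_pos hcond]
        rw [if_pos ⟨hjR, ht⟩, hgj, one_div]
      · rw [if_neg (fun h => hjR h.1), zero_div]
        exact hg0 j u
    · rw [if_neg (fun h => ht h.2), zero_div]
      exact hg0 j u
  have hsumint : Integrable (fun u => ∑ j : Fin n, g j u)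
      ((volume : Measure ℝ).restrict (Set.Ioo 0 1)) :=
    integrable_finset_sum _ (fun j _ => hgint j)
  calc (∫ u in Set.Ioo (0:ℝ) 1,
        (((eBHreject (Finset.univ : Finset (Fin n)) α (fun j => v j / u)).filter
            (fun j => truth j)).card : ℝ)
          / ((max (eBHreject (Finset.univ : Finset (Fin n)) α
              (fun j => v j / u)).card 1 : ℕ) : ℝ))
      = ∫ u in Set.Ioo (0:ℝ) 1, Fv u := rfl
    _ ≤ ∫ u in Set.Ioo (0:ℝ) 1, (∑ j : Fin n, g j u) :=
        setIntegral_mono_on hFint hsumint measurableSet_Ioo hpt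
    _ = ∑ j : Fin n, ∫ u in Set.Ioo (0:ℝ) 1, g j u :=
        integral_finset_sum _ (fun j _ => hgint j)
    _ ≤ ∑ j : Fin n, (if truth j then α * v j / n else 0) := by
        apply Finset.sum_le_sum
        intro j _
        by_cases ht : truth j
        · have : g j = fun u => if u ≤ (α * v j / n) * (K u : ℝ) then ((K u : ℝ))⁻¹ else 0 := by
            funext u; simp [hg, ht]
          rw [this, if_pos ht]
          exact core_int hKmeas hKanti hK1
            (div_nonneg (mul_nonneg hα.le (hv j)) (Nat.cast_nonneg n))
        · have : g j = fun _ => (0:ℝ) := by funext u; simp [hg, ht]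
          rw [this, if_neg ht]
          simp

set_option maxHeartbeats 2000000 in
/-- boosted e-BH (U-eBH) preserves FDR. If nonnegative `e_1,…,e_n`
satisfy the compound condition `Σ_j E[e_j 1{H_j}] ≤ n` and `U ∼ Unif(0,1)` is
independent of the e-values, then e-BH applied to the boosted values `e_j/U` at level
`α` controls the FDR at `α`. -/
theorem boosted_ebh_fdr_control {Ω : Type*} [MeasurableSpace Ω]
    (μ : Measure Ω) [IsProbabilityMeasure μ] (n : ℕ) (α : ℝ) (hα : 0 < α)
    (e : Fin n → Ω → ℝ) (truth : Fin n → Prop)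
    (hmeas : ∀ j, Measurable (e j)) (hint : ∀ j, Integrable (e j) μ)
    (hnn : ∀ j ω, 0 ≤ e j ω)
    (hcompound : ∑ j : Fin n, ∫ ω, e j ω * (if truth j then (1 : ℝ) else 0) ∂μ ≤ n)
    (U : Ω → ℝ) (hU : Measurable U)
    (hUnif : Measure.map U μ = (volume : Measure ℝ).restrict (Set.Ioo 0 1))
    (hindep : IndepFun U (fun ω => fun j : Fin n => e j ω) μ) :
    ∫ ω, (((eBHreject (Finset.univ : Finset (Fin n)) α fun j => e j ω / U ω).filter
            (fun j => truth j)).card : ℝ)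
        / ((max (eBHreject (Finset.univ : Finset (Fin n)) α fun j => e j ω / U ω).card 1 : ℕ) : ℝ) ∂μ
      ≤ α := by
  rcases Nat.eq_zero_or_pos n with hn | hn
  · haveI : IsEmpty (Fin n) := by rw [hn]; exact Fin.isEmpty
    have h0 : ∀ ω : Ω, (((eBHreject (Finset.univ : Finset (Fin n)) α fun j => e j ω / U ω).filter
            (fun j => truth j)).card : ℝ)
        / ((max (eBHreject (Finset.univ : Finset (Fin n)) α
            fun j => e j ω / U ω).card 1 : ℕ) : ℝ) = 0 := by
      intro ω
      have : ((eBHreject (Finset.univ : Finset (Fin n)) α fun j => e j ω / U ω).filter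
          (fun j => truth j)) = ∅ := Finset.eq_empty_of_isEmpty _
      rw [this]
      simp
    have : (∫ ω, (((eBHreject (Finset.univ : Finset (Fin n)) α fun j => e j ω / U ω).filter
            (fun j => truth j)).card : ℝ)
        / ((max (eBHreject (Finset.univ : Finset (Fin n)) α
            fun j => e j ω / U ω).card 1 : ℕ) : ℝ) ∂μ) = 0 := by
      rw [integral_congr_ae (ae_of_all _ h0), integral_zero]
    rw [this]
    exact hα.le
  · haveI hfin : IsFiniteMeasure ((volume : Measure ℝ).restrict (Set.Ioo (0:ℝ) 1)) := by
      constructor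
      rw [Measure.restrict_apply_univ, Real.volume_Ioo]
      exact ENNReal.ofReal_lt_top
    have hn' : (0:ℝ) < n := by exact_mod_cast hn
    set X : Ω → (Fin n → ℝ) := fun ω => fun j : Fin n => e j ω with hXdef
    have hX : Measurable X := measurable_pi_lambda _ (fun j => hmeas j)
    have hEmeas : ∀ j : Fin n, Measurable fun p : ℝ × (Fin n → ℝ) => p.2 j / p.1 :=
      fun j => ((measurable_pi_apply j).comp measurable_snd).div measurable_fst
    set F : ℝ × (Fin n → ℝ) → ℝ := fun p =>
      (((eBHreject (Finset.univ : Finset (Fin n)) α (fun j => p.2 j / p.1)).filter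
          (fun j => truth j)).card : ℝ)
        / ((max (eBHreject (Finset.univ : Finset (Fin n)) α
            (fun j => p.2 j / p.1)).card 1 : ℕ) : ℝ) with hFdef
    have hFmeas : Measurable F :=
      meas_F (β := ℝ × (Fin n → ℝ)) (E := fun p (j : Fin n) => p.2 j / p.1) α hEmeas truth
    have hFnn : ∀ p, 0 ≤ F p := fun p => div_nonneg (Nat.cast_nonneg _) (Nat.cast_nonneg _)
    have hFbd : ∀ p, F p ≤ (n:ℝ) := by
      intro p
      have h1 : ((((eBHreject (Finset.univ : Finset (Fin n)) α (fun j => p.2 j / p.1)).filter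
          (fun j => truth j)).card : ℕ) : ℝ) ≤ (n:ℝ) := by
        exact_mod_cast le_trans (Finset.card_filter_le _ _)
          (le_trans (Finset.card_le_univ _) (le_of_eq (Finset.card_fin n)))
      have h2 : (1:ℝ) ≤ ((max (eBHreject (Finset.univ : Finset (Fin n)) α
          (fun j => p.2 j / p.1)).card 1 : ℕ) : ℝ) := by exact_mod_cast le_max_right _ _
      calc F p ≤ (n:ℝ)/1 := div_le_div₀ (Nat.cast_nonneg n) h1 one_pos h2
        _ = (n:ℝ) := div_one _
    set ν : Measure (Fin n → ℝ) := μ.map X with hν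
    haveI : IsProbabilityMeasure ν := Measure.isProbabilityMeasure_map hX.aemeasurable
    have hmap : μ.map (fun ω => (U ω, X ω))
        = ((volume : Measure ℝ).restrict (Set.Ioo 0 1)).prod ν := by
      rw [hν, ← hUnif]
      exact (indepFun_iff_map_prod_eq_prod_map_map hU.aemeasurable hX.aemeasurable).mp hindep
    have hFint : Integrable F (((volume : Measure ℝ).restrict (Set.Ioo 0 1)).prod ν) :=
      Integrable.mono' (integrable_const (n:ℝ)) hFmeas.aestronglyMeasurable
        (ae_of_all _ fun p => by rw [Real.norm_eq_abs, abs_of_nonneg (hFnn p)]; exact hFbd p)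
    have hsmeas : MeasurableSet {v : Fin n → ℝ | ∀ j, 0 ≤ v j} := by
      rw [Set.setOf_forall]
      exact MeasurableSet.iInter fun j => measurableSet_le measurable_const (measurable_pi_apply j)
    have hae : ∀ᵐ v ∂ν, ∀ j, 0 ≤ v j := by
      rw [hν, ae_map_iff hX.aemeasurable hsmeas]
      exact ae_of_all _ fun ω j => hnn j ω
    have hintj : ∀ j : Fin n, Integrable (fun v : Fin n → ℝ => v j) ν := by
      intro j
      rw [hν, integrable_map_measure (measurable_pi_apply j).aestronglyMeasurable
        hX.aemeasurable]
      exact hint j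
    have hΦint : Integrable (fun v : Fin n → ℝ =>
        ∑ j : Fin n, (if truth j then α * v j / n else 0)) ν := by
      apply integrable_finset_sum
      intro j _
      by_cases ht : truth j
      · simp only [if_pos ht]
        exact ((hintj j).const_mul α).div_const _
      · simp only [if_neg ht]
        exact integrable_const 0
    have step3 : (∫ v, (∫ u, F (u, v) ∂((volume : Measure ℝ).restrict (Set.Ioo 0 1))) ∂ν)
        ≤ ∫ v, (∑ j : Fin n, (if truth j then α * v j / n else 0)) ∂ν := by
      apply integral_mono_ae (hFint.integral_prod_right) hΦint
      filter_upwards [hae] with v hv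
      exact inner_bound hn hα truth v hv
    have step4 : (∫ v, (∑ j : Fin n, (if truth j then α * v j / n else 0)) ∂ν) ≤ α := by
      have hsum : (∫ v, (∑ j : Fin n, (if truth j then α * v j / n else 0)) ∂ν)
          = ∑ j : Fin n, (if truth j then α * (∫ ω, e j ω ∂μ) / n else 0) := by
        rw [integral_finset_sum]
        · apply Finset.sum_congr rfl
          intro j _
          by_cases ht : truth j
          · simp only [if_pos ht]
            rw [integral_div, integral_const_mul]
            congr 2
            rw [hν, integral_map hX.aemeasurable (measurable_pi_apply j).aestronglyMeasurable]
          · simp [ht]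
        · intro j _
          by_cases ht : truth j
          · simp only [if_pos ht]
            exact ((hintj j).const_mul α).div_const _
          · simp only [if_neg ht]
            exact integrable_const 0
      rw [hsum]
      have hTle : (∑ j : Fin n, (if truth j then (∫ ω, e j ω ∂μ) else 0)) ≤ (n:ℝ) := by
        calc (∑ j : Fin n, (if truth j then (∫ ω, e j ω ∂μ) else 0))
            = ∑ j : Fin n, ∫ ω, e j ω * (if truth j then (1:ℝ) else 0) ∂μ := by
              apply Finset.sum_congr rfl
              intro j _
              by_cases ht : truth j <;> simp [ht]
          _ ≤ (n:ℝ) := hcompound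
      have hrw : (∑ j : Fin n, (if truth j then α * (∫ ω, e j ω ∂μ) / n else 0))
          = α / n * ∑ j : Fin n, (if truth j then (∫ ω, e j ω ∂μ) else 0) := by
        rw [Finset.mul_sum]
        apply Finset.sum_congr rfl
        intro j _
        by_cases ht : truth j
        · simp only [if_pos ht]; ring
        · simp [ht]
      rw [hrw]
      calc α / (n:ℝ) * ∑ j : Fin n, (if truth j then (∫ ω, e j ω ∂μ) else 0)
          ≤ α / (n:ℝ) * (n:ℝ) := by
            apply mul_le_mul_of_nonneg_left hTle (by positivity)
        _ = α := div_mul_cancel₀ α (ne_of_gt hn')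
    calc (∫ ω, (((eBHreject (Finset.univ : Finset (Fin n)) α fun j => e j ω / U ω).filter
            (fun j => truth j)).card : ℝ)
        / ((max (eBHreject (Finset.univ : Finset (Fin n)) α
            fun j => e j ω / U ω).card 1 : ℕ) : ℝ) ∂μ)
        = ∫ ω, F (U ω, X ω) ∂μ := rfl
      _ = ∫ p, F p ∂(((volume : Measure ℝ).restrict (Set.Ioo 0 1)).prod ν) := by
          rw [← hmap]
          exact (integral_map (hU.aemeasurable.prodMk hX.aemeasurable)
            hFmeas.aestronglyMeasurable).symm
      _ = ∫ v, (∫ u, F (u, v) ∂((volume : Measure ℝ).restrict (Set.Ioo 0 1))) ∂ν :=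
          integral_prod_symm F hFint
      _ ≤ ∫ v, (∑ j : Fin n, (if truth j then α * v j / n else 0)) ∂ν := step3
      _ ≤ α := step4
end
end

section
/- Equality of conditional expectations under within-group identical distribution: suppose conditional on the group-size vector N_{K+1:K+M}, the random variables e_{j,1} 1{H_{j,1}}, ..., e_{j,N_{K+j}} 1{H_{j,N_{K+j}}} are identically distributed, and each e_{j,i} is conditionally independent of N_{K+j} given the other group sizes N_{-(K+j)}. Then E[e_{j,i} 1{H_{j,i}} | N_{K+1:K+M}] = E[(1/N_{K+j}) Σ_{i'=1}^{N_{K+j}} e_{j,i'} 1{H_{j,i'}} | N_{-(K+j)}] for every i ∈ [N_{K+j}]. -/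
open MeasureTheory ProbabilityTheory Finset
open scoped Classical

noncomputable section

private lemma measurable_nat_comp {Ω : Type*} [MeasurableSpace Ω] {Nf : Ω → ℕ}
    (hN : Measurable Nf) {F : ℕ → Ω → ℝ} (hF : ∀ m, Measurable (F m)) :
    Measurable fun ω => F (Nf ω) ω := by
  intro s hs
  have h : (fun ω => F (Nf ω) ω) ⁻¹' s = ⋃ m, {ω | Nf ω = m} ∩ F m ⁻¹' s := by
    ext ω
    simp only [Set.mem_preimage, Set.mem_iUnion, Set.mem_inter_iff, Set.mem_setOf_eq]
    exact ⟨fun h => ⟨Nf ω, rfl, h⟩, by rintro ⟨m, rfl, h⟩; exact h⟩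
  rw [h]
  exact MeasurableSet.iUnion fun m => (hN (measurableSet_singleton m)).inter (hF m hs)


private def sigmaN {Ω : Type*} {M : ℕ} (N : Fin M → Ω → ℕ) : MeasurableSpace Ω :=
  MeasurableSpace.comap (fun ω => fun l : Fin M => N l ω) inferInstance

private def sigmaN' {Ω : Type*} {M : ℕ} (N : Fin M → Ω → ℕ) (j : Fin M) : MeasurableSpace Ω :=
  MeasurableSpace.comap (fun ω => fun l : {l : Fin M // l ≠ j} => N (l : Fin M) ω) inferInstance

/-- equality of conditional expectations under within-group identical
distribution. If, conditionally on the group-size vector `N_{K+1:K+M}`, the variables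
`e_{j,1}1{H_{j,1}}, …, e_{j,N_{K+j}}1{H_{j,N_{K+j}}}` are identically distributed, and
each `e_{j,i}1{H_{j,i}}` is conditionally independent of `N_{K+j}` given the other
group sizes `N_{-(K+j)}` (expressed by equality of the conditional expectations given
`σ(N)` and `σ(N_{-(K+j)})`), then
`E[e_{j,i}1{H_{j,i}} | N_{K+1:K+M}] = E[(1/N_{K+j}) Σ_{i'} e_{j,i'}1{H_{j,i'}} | N_{-(K+j)}]`
for every `i ∈ [N_{K+j}]`. -/
theorem condexp_within_group_average {Ω : Type*} [mΩ : MeasurableSpace Ω]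
    (μ : Measure Ω) [IsProbabilityMeasure μ] (M : ℕ) (j : Fin M)
    (N : Fin M → Ω → ℕ) (hNmeas : ∀ l, Measurable (N l)) (hNpos : ∀ l ω, 0 < N l ω)
    (e : ℕ → Ω → ℝ) (H : ℕ → Ω → Prop)
    (hmeas : ∀ i, Measurable fun ω => e i ω * (if H i ω then (1 : ℝ) else 0))
    (hint : ∀ i, Integrable (fun ω => e i ω * (if H i ω then (1 : ℝ) else 0)) μ)
    -- within-group identical distribution, conditionally on the group sizes
    (hid : ∀ (i i' m : ℕ), i < m → i' < m → ∀ (s : Set ℝ), MeasurableSet s →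
      ∀ B : Set Ω,
        MeasurableSet[MeasurableSpace.comap (fun ω => fun l : Fin M => N l ω)
          inferInstance] B →
        μ (B ∩ {ω | N j ω = m ∧ e i ω * (if H i ω then (1 : ℝ) else 0) ∈ s})
          = μ (B ∩ {ω | N j ω = m ∧ e i' ω * (if H i' ω then (1 : ℝ) else 0) ∈ s}))
    -- conditional independence of each `e_{j,i}1{H_{j,i}}` from `N_{K+j}` given
    -- the other group sizes
    (hci : ∀ i : ℕ,
      μ[fun ω => e i ω * (if H i ω then (1 : ℝ) else 0)
          | MeasurableSpace.comap (fun ω => fun l : Fin M => N l ω) inferInstance]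
        =ᵐ[μ]
      μ[fun ω => e i ω * (if H i ω then (1 : ℝ) else 0)
          | MeasurableSpace.comap (fun ω => fun l : {l : Fin M // l ≠ j} => N (l : Fin M) ω)
            inferInstance]) :
    ∀ i : ℕ, ∀ᵐ ω ∂μ, i < N j ω →
      (μ[fun ω' => e i ω' * (if H i ω' then (1 : ℝ) else 0)
          | MeasurableSpace.comap (fun ω' => fun l : Fin M => N l ω') inferInstance]) ω
        =
      (μ[fun ω' => (1 / (N j ω' : ℝ)) * ∑ i' ∈ Finset.range (N j ω'),
            e i' ω' * (if H i' ω' then (1 : ℝ) else 0)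
          | MeasurableSpace.comap (fun ω' => fun l : {l : Fin M // l ≠ j} => N (l : Fin M) ω')
            inferInstance]) ω := by
  intro i
  set f : ℕ → Ω → ℝ := fun i ω => e i ω * (if H i ω then (1 : ℝ) else 0) with hf_def
  have hGle : sigmaN N ≤ mΩ :=
    Measurable.comap_le (measurable_pi_lambda _ fun l => hNmeas l)
  have hG'le : sigmaN' N j ≤ mΩ :=
    Measurable.comap_le (measurable_pi_lambda _ fun l => hNmeas l)
  have hG'G : sigmaN' N j ≤ sigmaN N := by
    unfold sigmaN sigmaN'
    have hcomp : (fun ω => fun l : {l : Fin M // l ≠ j} => N (l : Fin M) ω)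
        = (fun v : Fin M → ℕ => fun l : {l : Fin M // l ≠ j} => v l)
          ∘ (fun ω => fun l : Fin M => N l ω) := rfl
    rw [hcomp, ← MeasurableSpace.comap_comp]
    exact MeasurableSpace.comap_mono
      (Measurable.comap_le (measurable_pi_lambda _ fun l => measurable_pi_apply _))
  haveI : SigmaFinite (μ.trim hGle) := inferInstance
  haveI : SigmaFinite (μ.trim hG'le) := inferInstance
  set A : ℕ → Set Ω := fun m => {ω | N j ω = m} with hA_def
  have hA : ∀ m, MeasurableSet (A m) := fun m => hNmeas j (measurableSet_singleton m)
  have hAG : ∀ m, MeasurableSet[sigmaN N] (A m) := fun m =>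
    ⟨(fun v : Fin M → ℕ => v j) ⁻¹' {m}, measurable_pi_apply j (measurableSet_singleton m), rfl⟩
  have hAdis : Pairwise (Function.onFun Disjoint A) := fun m m' hmm' =>
    Set.disjoint_left.mpr fun ω h1 h2 => hmm' (h1.symm.trans h2)
  have hAuniv : (⋃ m, A m) = Set.univ := Set.iUnion_eq_univ_iff.mpr fun ω => ⟨N j ω, rfl⟩
  have hA0 : A 0 = ∅ := Set.eq_empty_iff_forall_notMem.mpr fun ω h => (hNpos j ω).ne' h
  -- key consequence of `hid`: equal integrals of any measurable function of `f i`
  have key : ∀ (m i₁ i₂ : ℕ), i₁ < m → i₂ < m → ∀ B : Set Ω, MeasurableSet[sigmaN N] B →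
      ∀ φ : ℝ → ℝ, Measurable φ →
      ∫ ω in B ∩ A m, φ (f i₁ ω) ∂μ = ∫ ω in B ∩ A m, φ (f i₂ ω) ∂μ := by
    intro m i₁ i₂ h1 h2 B hB φ hφ
    have hBm : MeasurableSet B := hGle _ hB
    have hmap : Measure.map (f i₁) (μ.restrict (B ∩ A m))
        = Measure.map (f i₂) (μ.restrict (B ∩ A m)) := by
      ext s hs
      rw [Measure.map_apply (hmeas i₁) hs, Measure.map_apply (hmeas i₂) hs,
        Measure.restrict_apply ((hmeas i₁) hs), Measure.restrict_apply ((hmeas i₂) hs)]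
      have e1 : f i₁ ⁻¹' s ∩ (B ∩ A m) = B ∩ {ω | N j ω = m ∧ f i₁ ω ∈ s} := by
        ext ω
        simp only [Set.mem_inter_iff, Set.mem_preimage, Set.mem_setOf_eq, hA_def]
        tauto
      have e2 : f i₂ ⁻¹' s ∩ (B ∩ A m) = B ∩ {ω | N j ω = m ∧ f i₂ ω ∈ s} := by
        ext ω
        simp only [Set.mem_inter_iff, Set.mem_preimage, Set.mem_setOf_eq, hA_def]
        tauto
      rw [e1, e2]
      exact hid i₁ i₂ m h1 h2 s hs B hB
    calc ∫ ω in B ∩ A m, φ (f i₁ ω) ∂μ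
        = ∫ x, φ x ∂(Measure.map (f i₁) (μ.restrict (B ∩ A m))) :=
          (integral_map (hmeas i₁).aemeasurable
            hφ.stronglyMeasurable.aestronglyMeasurable).symm
      _ = ∫ x, φ x ∂(Measure.map (f i₂) (μ.restrict (B ∩ A m))) := by rw [hmap]
      _ = ∫ ω in B ∩ A m, φ (f i₂ ω) ∂μ :=
          integral_map (hmeas i₂).aemeasurable hφ.stronglyMeasurable.aestronglyMeasurable
  -- the within-group average
  set gm : ℕ → Ω → ℝ := fun m ω => (1 / (m : ℝ)) * ∑ i' ∈ Finset.range m, f i' ω with hgm_def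
  set avg : Ω → ℝ := fun ω => gm (N j ω) ω with havg_def
  have hgm_meas : ∀ m, Measurable (gm m) := fun m =>
    (Finset.measurable_sum _ fun i' _ => hmeas i').const_mul _
  have hgm_int : ∀ m, Integrable (gm m) μ := fun m =>
    (integrable_finset_sum _ fun i' _ => hint i').const_mul _
  have havg_meas : Measurable avg := measurable_nat_comp (hNmeas j) hgm_meas
  have havg_eq_on : ∀ m, ∀ ω ∈ A m, avg ω = gm m ω := fun m ω hω =>
    congrArg (fun k => gm k ω) hω
  -- integrability of the average
  have hnorm_sum : HasSum (fun m => ∫ ω in A m, ‖f 0 ω‖ ∂μ) (∫ ω in ⋃ m, A m, ‖f 0 ω‖ ∂μ) :=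
    hasSum_integral_iUnion hA hAdis (by rw [hAuniv]; exact (hint 0).norm.integrableOn)
  have hbound : ∀ m, ∫⁻ ω in A m, ‖avg ω‖₊ ∂μ ≤ ENNReal.ofReal (∫ ω in A m, ‖f 0 ω‖ ∂μ) := by
    intro m
    have h1 : ∫⁻ ω in A m, ‖avg ω‖₊ ∂μ = ∫⁻ ω in A m, ‖gm m ω‖₊ ∂μ :=
      setLIntegral_congr_fun (hA m) (fun ω hω => by rw [havg_eq_on m ω hω])
    have h2 : ∫⁻ ω in A m, ‖gm m ω‖₊ ∂μ = ENNReal.ofReal (∫ ω in A m, ‖gm m ω‖ ∂μ) :=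
      (ofReal_integral_norm_eq_lintegral_enorm (hgm_int m).integrableOn).symm
    rw [h1, h2]
    refine ENNReal.ofReal_le_ofReal ?_
    rcases Nat.eq_zero_or_pos m with hm | hm
    · subst hm
      rw [hA0]
      simp only [Measure.restrict_empty, integral_zero_measure, le_refl]
    · calc ∫ ω in A m, ‖gm m ω‖ ∂μ
          ≤ ∫ ω in A m, (1 / (m : ℝ)) * ∑ i' ∈ Finset.range m, ‖f i' ω‖ ∂μ := by
            refine integral_mono_of_nonneg (ae_of_all _ fun ω => norm_nonneg _)
              ((integrable_finset_sum _ fun i' _ => (hint i').norm).const_mul _).integrableOn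
              (ae_of_all _ fun ω => ?_)
            calc ‖gm m ω‖ = (1 / (m : ℝ)) * ‖∑ i' ∈ Finset.range m, f i' ω‖ := by
                  rw [hgm_def]
                  simp only [norm_mul, Real.norm_eq_abs]
                  rw [abs_of_nonneg (by positivity)]
              _ ≤ (1 / (m : ℝ)) * ∑ i' ∈ Finset.range m, ‖f i' ω‖ :=
                  mul_le_mul_of_nonneg_left (norm_sum_le _ _) (by positivity)
        _ = (1 / (m : ℝ)) * ∑ i' ∈ Finset.range m, ∫ ω in A m, ‖f i' ω‖ ∂μ := by
            rw [integral_const_mul, integral_finset_sum _ fun i' _ => (hint i').norm.integrableOn]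
        _ = (1 / (m : ℝ)) * ∑ i' ∈ Finset.range m, ∫ ω in A m, ‖f 0 ω‖ ∂μ := by
            congr 1
            refine Finset.sum_congr rfl fun i' hi' => ?_
            have h := key m i' 0 (Finset.mem_range.mp hi') hm Set.univ
              (MeasurableSet.univ) (fun x => ‖x‖) measurable_norm
            simpa [Set.univ_inter] using h
        _ = ∫ ω in A m, ‖f 0 ω‖ ∂μ := by
            rw [Finset.sum_const, Finset.card_range, nsmul_eq_mul]
            field_simp
  have havg_int : Integrable avg μ := by
    refine ⟨havg_meas.aestronglyMeasurable, ?_⟩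
    rw [HasFiniteIntegral, ← setLIntegral_univ, ← hAuniv, lintegral_iUnion hA hAdis]
    calc ∑' m, ∫⁻ ω in A m, ‖avg ω‖₊ ∂μ
        ≤ ∑' m, ENNReal.ofReal (∫ ω in A m, ‖f 0 ω‖ ∂μ) := ENNReal.tsum_le_tsum hbound
      _ = ENNReal.ofReal (∑' m, ∫ ω in A m, ‖f 0 ω‖ ∂μ) :=
          (ENNReal.ofReal_tsum_of_nonneg
            (fun m => integral_nonneg fun ω => norm_nonneg _) hnorm_sum.summable).symm
      _ < ⊤ := ENNReal.ofReal_lt_top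
  -- integrals of `avg` and `f 0` agree on `G'`-measurable (indeed `G`-measurable) sets
  have hsets : ∀ s : Set Ω, MeasurableSet[sigmaN N] s →
      ∫ ω in s, avg ω ∂μ = ∫ ω in s, f 0 ω ∂μ := by
    intro s hsG
    have hsm : MeasurableSet s := hGle _ hsG
    have hdecomp : (⋃ m, s ∩ A m) = s := by
      rw [← Set.inter_iUnion, hAuniv, Set.inter_univ]
    have hmeasInter : ∀ m, MeasurableSet (s ∩ A m) := fun m => hsm.inter (hA m)
    have hdisInter : Pairwise (Function.onFun Disjoint fun m => s ∩ A m) := fun m m' h =>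
      ((hAdis h).mono Set.inter_subset_right Set.inter_subset_right)
    have hterm : ∀ m, ∫ ω in s ∩ A m, avg ω ∂μ = ∫ ω in s ∩ A m, f 0 ω ∂μ := by
      intro m
      rcases Nat.eq_zero_or_pos m with hm | hm
      · subst hm
        rw [hA0, Set.inter_empty]
        simp only [Measure.restrict_empty, integral_zero_measure]
      · have h1 : ∫ ω in s ∩ A m, avg ω ∂μ = ∫ ω in s ∩ A m, gm m ω ∂μ :=
          setIntegral_congr_fun (hmeasInter m) fun ω hω => havg_eq_on m ω hω.2
        rw [h1]
        calc ∫ ω in s ∩ A m, gm m ω ∂μ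
            = (1 / (m : ℝ)) * ∑ i' ∈ Finset.range m, ∫ ω in s ∩ A m, f i' ω ∂μ := by
              rw [hgm_def]
              rw [integral_const_mul, integral_finset_sum _ fun i' _ => (hint i').integrableOn]
          _ = (1 / (m : ℝ)) * ∑ i' ∈ Finset.range m, ∫ ω in s ∩ A m, f 0 ω ∂μ := by
              congr 1
              refine Finset.sum_congr rfl fun i' hi' => ?_
              exact key m i' 0 (Finset.mem_range.mp hi') hm s hsG id measurable_id
          _ = ∫ ω in s ∩ A m, f 0 ω ∂μ := by
              rw [Finset.sum_const, Finset.card_range, nsmul_eq_mul]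
              field_simp
    calc ∫ ω in s, avg ω ∂μ = ∫ ω in ⋃ m, s ∩ A m, avg ω ∂μ := by rw [hdecomp]
      _ = ∑' m, ∫ ω in s ∩ A m, avg ω ∂μ :=
          integral_iUnion hmeasInter hdisInter (by rw [hdecomp]; exact havg_int.integrableOn)
      _ = ∑' m, ∫ ω in s ∩ A m, f 0 ω ∂μ := tsum_congr hterm
      _ = ∫ ω in ⋃ m, s ∩ A m, f 0 ω ∂μ :=
          (integral_iUnion hmeasInter hdisInter
            (by rw [hdecomp]; exact (hint 0).integrableOn)).symm
      _ = ∫ ω in s, f 0 ω ∂μ := by rw [hdecomp]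
  -- Step B : E[f 0 | G'] = E[avg | G'] a.e.
  have hB : μ[f 0|sigmaN' N j] =ᵐ[μ] μ[avg|sigmaN' N j] := by
    refine ae_eq_condExp_of_forall_setIntegral_eq hG'le havg_int
      (fun s _ _ => integrable_condExp.integrableOn) (fun s hs _ => ?_)
      (StronglyMeasurable.aestronglyMeasurable stronglyMeasurable_condExp)
    rw [setIntegral_condExp hG'le (hint 0) hs]
    exact (hsets s (hG'G _ hs)).symm
  -- Step A : on `{N j = m}`, E[f i | G] = E[f 0 | G] a.e.
  have hstepA : ∀ m, i < m →
      (A m).indicator (μ[f i|sigmaN N]) =ᵐ[μ] (A m).indicator (μ[f 0|sigmaN N]) := by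
    intro m him
    have hm0 : 0 < m := lt_of_le_of_lt (Nat.zero_le i) him
    have h2 : μ[(A m).indicator (f 0)|sigmaN N] =ᵐ[μ] μ[(A m).indicator (f i)|sigmaN N] := by
      refine ae_eq_condExp_of_forall_setIntegral_eq hGle ((hint i).indicator (hA m))
        (fun s _ _ => integrable_condExp.integrableOn) (fun s hs _ => ?_)
        (StronglyMeasurable.aestronglyMeasurable stronglyMeasurable_condExp)
      rw [setIntegral_condExp hGle ((hint 0).indicator (hA m)) hs,
        setIntegral_indicator (hA m), setIntegral_indicator (hA m)]
      exact key m 0 i hm0 him s hs id measurable_id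
    calc (A m).indicator (μ[f i|sigmaN N])
        =ᵐ[μ] μ[(A m).indicator (f i)|sigmaN N] := (condExp_indicator (hint i) (hAG m)).symm
      _ =ᵐ[μ] μ[(A m).indicator (f 0)|sigmaN N] := h2.symm
      _ =ᵐ[μ] (A m).indicator (μ[f 0|sigmaN N]) := condExp_indicator (hint 0) (hAG m)
  have hAe : ∀ᵐ ω ∂μ, ∀ m, i < m →
      (A m).indicator (μ[f i|sigmaN N]) ω = (A m).indicator (μ[f 0|sigmaN N]) ω := by
    rw [ae_all_iff]
    intro m
    by_cases him : i < m
    · exact (hstepA m him).mono fun ω h _ => h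
    · exact ae_of_all _ fun ω h => absurd h him
  filter_upwards [hAe, hci 0, hB] with ω h1 h0 hb him
  have hmem : ω ∈ A (N j ω) := rfl
  have h2 := h1 (N j ω) him
  rw [Set.indicator_of_mem hmem, Set.indicator_of_mem hmem] at h2
  exact h2.trans (h0.trans hb)
end
end
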